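/- arXiv:2106.10312 — 9 statements merged into one kernel-verified Lean document; each statement's English description precedes it below -/
import Mathlib

section
/- Let X be a nonnegative absolutely continuous random variable with support (0,s) and CDF K, let ψ ≥ 0, and let Y = aX + b with a > 0 and b ≥ 0. Then CPE_γ^ψ(Y) = (a/Γ(γ+1)) ∫_0^s ψ(ax+b) K(x) (−ln K(x))^γ dx for all γ>0. In particular, for the weight ψ(x)=x one has CPE_γ^{ψ(x)=x}(Y) = a² CPE_γ^{ψ(x)=x}(X) + a b CPE_γ(X), where CPE_γ(X) = (1/Γ(γ+1)) ∫_0^s K(x)(−ln K(x))^γ dx. -/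
open MeasureTheory Set Filter

/-- Change of variables `y = a·x + b` for set integrals over open intervals. -/
lemma change_of_var (a b s : ℝ) (ha : 0 < a) (hs : 0 ≤ s) (f : ℝ → ℝ) :
    ∫ y in Set.Ioo b (a * s + b), f y = a * ∫ x in Set.Ioo 0 s, f (a * x + b) := by
  have hle : b ≤ a * s + b := by nlinarith
  have h1 : ∫ y in Set.Ioo b (a * s + b), f y = ∫ y in b..(a * s + b), f y := by
    rw [intervalIntegral.integral_of_le hle, integral_Ioc_eq_integral_Ioo]
  have h2 : ∫ x in Set.Ioo 0 s, f (a * x + b) = ∫ x in (0:ℝ)..s, f (a * x + b) := by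
    rw [intervalIntegral.integral_of_le hs, integral_Ioc_eq_integral_Ioo]
  rw [h1, h2, intervalIntegral.integral_comp_mul_add f ha.ne' b, smul_eq_mul,
    ← mul_assoc, mul_inv_cancel₀ ha.ne', one_mul, mul_zero, zero_add]

/-- pointwise bound for `t (−ln t)^γ` on `[0,1]`. -/
lemma t_mul_neg_log_rpow_le (γ : ℝ) (hγ : 0 < γ) (t : ℝ) (ht0 : 0 ≤ t) (ht1 : t ≤ 1) :
    t * (-Real.log t) ^ γ ≤ (2 * γ) ^ γ := by
  have hC : (0:ℝ) < (2 * γ) ^ γ := Real.rpow_pos_of_pos (by linarith) γ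
  rcases eq_or_lt_of_le ht0 with h | ht
  · simp [← h, Real.rpow_natCast, Real.zero_rpow hγ.ne', hC.le]
  set c : ℝ := 1 / (2 * γ) with hc
  have hcpos : 0 < c := by positivity
  have hlog : -Real.log t ≤ t ^ (-c) / c := by
    have h1 : Real.log (t ^ (-c)) ≤ t ^ (-c) - 1 :=
      Real.log_le_sub_one_of_pos (Real.rpow_pos_of_pos ht _)
    rw [Real.log_rpow ht] at h1
    have h2 : -c * Real.log t ≤ t ^ (-c) := by linarith
    rw [le_div_iff₀ hcpos]
    calc -Real.log t * c = -c * Real.log t := by ring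
      _ ≤ t ^ (-c) := h2
  have hnl : 0 ≤ -Real.log t := by
    simpa using Real.log_nonpos ht0 ht1
  have h3 : (-Real.log t) ^ γ ≤ (t ^ (-c) / c) ^ γ :=
    Real.rpow_le_rpow hnl hlog hγ.le
  have h4 : (t ^ (-c) / c) ^ γ = t ^ (-c * γ) * (2 * γ) ^ γ := by
    rw [div_eq_mul_inv, Real.mul_rpow (Real.rpow_nonneg ht0 _) (by positivity),
      ← Real.rpow_mul ht0]
    congr 1
    rw [hc]
    field_simp
  have hcγ : -c * γ = -(1/2 : ℝ) := by
    rw [hc]; field_simp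
  have h5 : t * (-Real.log t) ^ γ ≤ (2 * γ) ^ γ * (t * t ^ (-(1/2):ℝ)) := by
    calc t * (-Real.log t) ^ γ ≤ t * (t ^ (-c * γ) * (2 * γ) ^ γ) := by
          apply mul_le_mul_of_nonneg_left _ ht0
          rw [← h4]; exact h3
      _ = (2 * γ) ^ γ * (t * t ^ (-(1/2):ℝ)) := by rw [hcγ]; ring
  have h6 : t * t ^ (-(1/2):ℝ) = t ^ ((1/2):ℝ) := by
    nth_rewrite 1 [← Real.rpow_one t]
    rw [← Real.rpow_add ht]
    norm_num
  have h7 : t ^ ((1/2):ℝ) ≤ 1 := Real.rpow_le_one ht0 ht1 (by norm_num)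
  calc t * (-Real.log t) ^ γ ≤ (2 * γ) ^ γ * (t * t ^ (-(1/2):ℝ)) := h5
    _ = (2 * γ) ^ γ * t ^ ((1/2):ℝ) := by rw [h6]
    _ ≤ (2 * γ) ^ γ * 1 := by exact mul_le_mul_of_nonneg_left h7 hC.le
    _ = (2 * γ) ^ γ := by ring

/-- For `Y = aX + b` with `a > 0`, `b ≥ 0`, where `X` has CDF `K` and
support `(0,s)`, one has
`CPE_γ^ψ(Y) = (a/Γ(γ+1)) ∫_0^s ψ(ax+b) K(x) (−ln K(x))^γ dx`, and in particular for
`ψ(x) = x`, `CPE_γ^{x}(Y) = a² CPE_γ^{x}(X) + a b CPE_γ(X)`. -/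
theorem wfgcpe_affine_transform
    (s : ℝ) (hs : 0 < s) (a b : ℝ) (ha : 0 < a) (hb : 0 ≤ b)
    (μ : Measure ℝ) [IsProbabilityMeasure μ] (hac : μ ≪ volume)
    (hsupp : μ (Set.Ioo 0 s) = 1)
    (K : ℝ → ℝ) (hK : ∀ x, K x = (μ (Set.Iic x)).toReal)
    (KY : ℝ → ℝ)
    (hKY : ∀ y, KY y = (Measure.map (fun x => a * x + b) μ (Set.Iic y)).toReal)
    (ψ : ℝ → ℝ) (hψ0 : ∀ x, 0 ≤ ψ x)
    (γ : ℝ) (hγ : 0 < γ) :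
    ((1 / Real.Gamma (γ + 1)) *
        ∫ y in Set.Ioo b (a * s + b), ψ y * KY y * (-Real.log (KY y)) ^ γ
      = (a / Real.Gamma (γ + 1)) *
        ∫ x in Set.Ioo 0 s, ψ (a * x + b) * K x * (-Real.log (K x)) ^ γ)
    ∧
    ((1 / Real.Gamma (γ + 1)) *
        ∫ y in Set.Ioo b (a * s + b), y * KY y * (-Real.log (KY y)) ^ γ
      = a ^ 2 * ((1 / Real.Gamma (γ + 1)) *
            ∫ x in Set.Ioo 0 s, x * K x * (-Real.log (K x)) ^ γ)
        + a * b * ((1 / Real.Gamma (γ + 1)) *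
            ∫ x in Set.Ioo 0 s, K x * (-Real.log (K x)) ^ γ)) := by
  -- KY ∘ affine = K
  have hmeas_aff : Measurable fun x : ℝ => a * x + b :=
    (measurable_const_mul a).add_const b
  have hKeq : ∀ x, KY (a * x + b) = K x := by
    intro x
    rw [hKY, hK, Measure.map_apply hmeas_aff measurableSet_Iic]
    congr 2
    ext t
    simp only [Set.mem_preimage, Set.mem_Iic]
    constructor
    · intro h; nlinarith
    · intro h; nlinarith
  -- measurability and bounds for K
  have hKmono : Monotone K := by
    intro x y hxy
    rw [hK, hK]
    exact ENNReal.toReal_mono (measure_ne_top μ _) (measure_mono (Set.Iic_subset_Iic.2 hxy))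
  have hKmeas : Measurable K := hKmono.measurable
  have hK0 : ∀ x, 0 ≤ K x := fun x => by rw [hK]; exact ENNReal.toReal_nonneg
  have hK1 : ∀ x, K x ≤ 1 := fun x => by
    rw [hK]
    exact ENNReal.toReal_le_of_le_ofReal one_pos.le (by simpa using prob_le_one (μ := μ) (s := Set.Iic x))
  -- integrands
  set F : ℝ → ℝ := fun x => K x * (-Real.log (K x)) ^ γ with hF
  have hFmeas : Measurable F :=
    hKmeas.mul ((Real.continuous_rpow_const hγ.le).measurable.comp (hKmeas.log.neg))
  have hFnonneg : ∀ x, 0 ≤ F x := fun x =>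
    mul_nonneg (hK0 x) (Real.rpow_nonneg (by simpa using Real.log_nonpos (hK0 x) (hK1 x)) _)
  have hFbound : ∀ x, F x ≤ (2 * γ) ^ γ := fun x =>
    t_mul_neg_log_rpow_le γ hγ (K x) (hK0 x) (hK1 x)
  have hIoofin : volume (Set.Ioo (0:ℝ) s) < ⊤ := by
    rw [Real.volume_Ioo]; exact ENNReal.ofReal_lt_top
  -- Integrability of F on Ioo 0 s
  have hintF : IntegrableOn F (Set.Ioo 0 s) volume := by
    apply Integrable.mono' (integrableOn_const (C := (2 * γ) ^ γ) hIoofin.ne)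
      hFmeas.aestronglyMeasurable
    filter_upwards with x
    rw [Real.norm_of_nonneg (hFnonneg x)]
    exact hFbound x
  have hintxF : IntegrableOn (fun x => x * F x) (Set.Ioo 0 s) volume := by
    apply Integrable.mono' (integrableOn_const (C := s * (2 * γ) ^ γ) hIoofin.ne)
      (measurable_id.mul hFmeas).aestronglyMeasurable
    filter_upwards [ae_restrict_mem measurableSet_Ioo] with x hx
    simp only [Pi.mul_apply, id_eq]
    rw [Real.norm_of_nonneg (mul_nonneg hx.1.le (hFnonneg x))]
    exact mul_le_mul hx.2.le (hFbound x) (hFnonneg x) hs.le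
  constructor
  · rw [change_of_var a b s ha hs.le]
    simp only [hKeq]
    ring
  · rw [change_of_var a b s ha hs.le]
    simp only [hKeq]
    have hintG : IntegrableOn (fun x => x * K x * (-Real.log (K x)) ^ γ)
        (Set.Ioo 0 s) volume := by
      have heq : (fun x => x * K x * (-Real.log (K x)) ^ γ)
          = fun x => x * F x := by
        funext x; simp only [hF]; ring
      rw [heq]; exact hintxF
    have hsplit : ∫ x in Set.Ioo 0 s, (a * x + b) * K x * (-Real.log (K x)) ^ γ
        = a * (∫ x in Set.Ioo 0 s, x * K x * (-Real.log (K x)) ^ γ)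
          + b * (∫ x in Set.Ioo 0 s, K x * (-Real.log (K x)) ^ γ) := by
      rw [← integral_const_mul, ← integral_const_mul, ← integral_add
        (hintG.const_mul a) (hintF.const_mul b)]
      apply setIntegral_congr_fun measurableSet_Ioo
      intro x _
      ring
    rw [hsplit]
    ring
end

section
/- Let X₁ and X₂ be nonnegative absolutely continuous random variables, with X₂ supported in [0,s], with CDF K₁ of X₁ having support (0,s), such that X₁ ≤_st X₂ (i.e. K₂(x) ≤ K₁(x) for all x), and suppose E(X₁) and E(X₂) are finite and unequal. Define τ_γ^ψ(u) = (1/Γ(γ+1)) ∫_u^s ψ(x)(−ln K₁(x))^γ dx and assume τ_γ^ψ(x) < +∞ and the relevant expectations are finite. Let V be the nonnegative absolutely continuous random variable with density k_V(x) = (K̄₂(x) − K̄₁(x))/(E(X₂) − E(X₁)) for x>0, where K̄ᵢ = 1−Kᵢ. Then CPE_γ^ψ(X₁) = E[τ_γ^ψ(X₂)] + E[(τ_γ^ψ)′(V)]·(E(X₁) − E(X₂)). -/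
open MeasureTheory Set Filter

/-- Probabilistic mean value representation: if `X₁ ≤_st X₂`, the means
are finite and unequal, then
`CPE_γ^ψ(X₁) = E[τ_γ^ψ(X₂)] + E[(τ_γ^ψ)′(V)]·(E(X₁) − E(X₂))`,
where `V` has density `k_V(x) = (K̄₂(x) − K̄₁(x))/(E(X₂) − E(X₁))` on `x > 0`. -/
theorem wfgcpe_mean_value_representation
    (s : ℝ) (hs : 0 < s)
    (μ₁ μ₂ : Measure ℝ) [IsProbabilityMeasure μ₁] [IsProbabilityMeasure μ₂]
    (hac₁ : μ₁ ≪ volume) (hac₂ : μ₂ ≪ volume)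
    (hsupp₁ : μ₁ (Set.Ioo 0 s) = 1) (hsupp₂ : μ₂ (Set.Icc 0 s) = 1)
    (K₁ K₂ : ℝ → ℝ)
    (hK₁ : ∀ x, K₁ x = (μ₁ (Set.Iic x)).toReal)
    (hK₂ : ∀ x, K₂ x = (μ₂ (Set.Iic x)).toReal)
    (hst : ∀ x, K₂ x ≤ K₁ x)
    (hmean₁ : Integrable (fun x : ℝ => x) μ₁) (hmean₂ : Integrable (fun x : ℝ => x) μ₂)
    (hne : (∫ x, x ∂μ₁) ≠ ∫ x, x ∂μ₂)
    (ψ : ℝ → ℝ) (hψ0 : ∀ x, 0 ≤ ψ x)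
    (γ : ℝ) (hγ : 0 < γ)
    (τ : ℝ → ℝ)
    (hτ : ∀ u, τ u = (1 / Real.Gamma (γ + 1)) *
      ∫ x in Set.Ioo u s, ψ x * (-Real.log (K₁ x)) ^ γ)
    (hτfin : IntegrableOn (fun x => ψ x * (-Real.log (K₁ x)) ^ γ) (Set.Ioo 0 s))
    (hτint : Integrable τ μ₂)
    (kV : ℝ → ℝ)
    (hkV : ∀ x, kV x = ((1 - K₂ x) - (1 - K₁ x)) / ((∫ x, x ∂μ₂) - ∫ x, x ∂μ₁))
    (hderint : IntegrableOn (fun x => deriv τ x * kV x) (Set.Ioi 0)) :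
    (1 / Real.Gamma (γ + 1)) *
        ∫ x in Set.Ioo 0 s, ψ x * K₁ x * (-Real.log (K₁ x)) ^ γ
      = (∫ u, τ u ∂μ₂)
        + (∫ x in Set.Ioi 0, deriv τ x * kV x) * ((∫ x, x ∂μ₁) - ∫ x, x ∂μ₂) := by
  classical
  have hΓ : (0:ℝ) < Real.Gamma (γ + 1) := Real.Gamma_pos_of_pos (by linarith)
  set C : ℝ := 1 / Real.Gamma (γ + 1) with hCdef
  have hCne : C ≠ 0 := by positivity
  set E₁ : ℝ := ∫ x, x ∂μ₁ with hE₁def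
  set E₂ : ℝ := ∫ x, x ∂μ₂ with hE₂def
  set c : ℝ := E₂ - E₁ with hcdef
  have hcne : c ≠ 0 := sub_ne_zero.2 (Ne.symm hne)
  set f : ℝ → ℝ := fun x => ψ x * (-Real.log (K₁ x)) ^ γ with hfdef
  -- basic facts about the CDFs
  have hK₁0 : ∀ x, 0 ≤ K₁ x := fun x => (hK₁ x) ▸ ENNReal.toReal_nonneg
  have hK₂0 : ∀ x, 0 ≤ K₂ x := fun x => (hK₂ x) ▸ ENNReal.toReal_nonneg
  have hK₁1 : ∀ x, K₁ x ≤ 1 := fun x => by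
    rw [hK₁ x]
    simpa using (ENNReal.toReal_le_toReal (measure_ne_top _ _) ENNReal.one_ne_top).2
      (prob_le_one (μ := μ₁) (s := Iic x))
  have hK₂1 : ∀ x, K₂ x ≤ 1 := fun x => by
    rw [hK₂ x]
    simpa using (ENNReal.toReal_le_toReal (measure_ne_top _ _) ENNReal.one_ne_top).2
      (prob_le_one (μ := μ₂) (s := Iic x))
  have hK₁mono : Monotone K₁ := fun a b hab => by
    rw [hK₁ a, hK₁ b]
    exact ENNReal.toReal_mono (measure_ne_top _ _) (measure_mono (Iic_subset_Iic.2 hab))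
  have hK₂mono : Monotone K₂ := fun a b hab => by
    rw [hK₂ a, hK₂ b]
    exact ENNReal.toReal_mono (measure_ne_top _ _) (measure_mono (Iic_subset_Iic.2 hab))
  have hK₁meas : Measurable K₁ := hK₁mono.measurable
  have hK₂meas : Measurable K₂ := hK₂mono.measurable
  have hf0 : ∀ x, 0 ≤ f x := fun x =>
    mul_nonneg (hψ0 x) (Real.rpow_nonneg
      (neg_nonneg.2 (Real.log_nonpos (hK₁0 x) (hK₁1 x))) γ)
  -- K₁ vanishes on the nonpositive half-line
  have hcompl₁ : μ₁ (Ioo 0 s)ᶜ = 0 := by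
    have h : μ₁ (Ioo 0 s)ᶜ = μ₁ univ - μ₁ (Ioo 0 s) :=
      measure_compl measurableSet_Ioo (measure_ne_top _ _)
    rw [hsupp₁, measure_univ] at h
    simp [h]
  have hK₁neg : ∀ x ≤ (0:ℝ), K₁ x = 0 := by
    intro x hx
    rw [hK₁ x]
    have : μ₁ (Iic x) = 0 := by
      refine measure_mono_null ?_ hcompl₁
      intro y hy
      simp only [mem_compl_iff, mem_Ioo, not_and, not_lt]
      intro h0
      exact absurd (lt_of_lt_of_le h0 (le_trans hy hx)) (lt_irrefl 0)
    simp [this]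
  have hfneg : ∀ x ≤ (0:ℝ), f x = 0 := by
    intro x hx
    simp [hfdef, hK₁neg x hx, Real.log_zero, Real.zero_rpow hγ.ne']
  -- measurable nonnegative version of f
  have hfaem : AEStronglyMeasurable f (volume.restrict (Ioo 0 s)) := hτfin.1
  set g' : ℝ → ℝ := fun x => max (hfaem.mk f x) 0 with hg'def
  set g : ℝ → ℝ := (Ioo 0 s).indicator g' with hgdef
  have hg'meas : Measurable g' := (hfaem.stronglyMeasurable_mk.measurable).max measurable_const
  have hg_meas : Measurable g := hg'meas.indicator measurableSet_Ioo
  have hg0 : ∀ x, 0 ≤ g x := fun x => by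
    by_cases hx : x ∈ Ioo 0 s <;> simp [hgdef, indicator, hx, le_max_right, hg'def]
  have hfmk : f =ᵐ[volume.restrict (Ioo 0 s)] g' := by
    filter_upwards [hfaem.ae_eq_mk] with x hx
    rw [hg'def]
    simp only [← hx, max_eq_left (hf0 x)]
  have hg'int : IntegrableOn g' (Ioo 0 s) := hτfin.congr hfmk
  have hg_int : Integrable g volume := by
    rw [hgdef, integrable_indicator_iff measurableSet_Ioo]
    exact hg'int
  have hfg_ae : f =ᵐ[volume.restrict (Ioo 0 s)] g := by
    filter_upwards [hfmk, ae_restrict_mem measurableSet_Ioo] with x hx hmem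
    rw [hx, hgdef, indicator_of_mem hmem]
  have hgout : ∀ x ∉ Ioo 0 s, g x = 0 := fun x hx => indicator_of_notMem hx _
  have hgg' : EqOn g g' (Ioo 0 s) := fun x hx => indicator_of_mem hx _
  have habsorb : ∀ (F : ℝ → ℝ) (x : ℝ),
      g x * F x = (Ioo 0 s).indicator (fun y => g y * F y) x := by
    intro F x
    by_cases hx : x ∈ Ioo 0 s
    · rw [indicator_of_mem hx]
    · rw [indicator_of_notMem hx, hgout x hx, zero_mul]
  -- the primitive G and total mass I
  set I : ℝ := ∫ x, g x with hIdef
  set G : ℝ → ℝ := fun u => ∫ x in Iic u, g x with hGdef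
  have hGint_eq : ∀ u, G u = ∫ x in Iic u ∩ Ioo 0 s, g' x := fun u => by
    rw [hGdef]
    exact setIntegral_indicator measurableSet_Ioo
  have hI_eq : I = ∫ x in Ioo 0 s, g' x := by
    rw [hIdef, hgdef, integral_indicator measurableSet_Ioo]
  -- the key formula τ u = C * (I - G u)
  have hτG : ∀ u, τ u = C * (I - G u) := by
    intro u
    rw [hτ u, hGint_eq u, hI_eq]
    congr 1
    rcases le_or_gt u 0 with hu | hu
    · have h1 : Iic u ∩ Ioo 0 s = ∅ := by
        ext x
        simp only [mem_inter_iff, mem_Iic, mem_Ioo, mem_empty_iff_false, iff_false, not_and]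
        intro hxu h0
        linarith
      rw [h1, setIntegral_empty, sub_zero]
      have h2 : ∫ x in Ioo u s, f x = ∫ x in Ioo u s, (Ioo 0 s).indicator f x := by
        refine setIntegral_congr_fun measurableSet_Ioo fun x hx => ?_
        by_cases hmem : x ∈ Ioo 0 s
        · rw [indicator_of_mem hmem]
        · have hx0 : x ≤ 0 := by
            simp only [mem_Ioo, not_and, not_lt] at hmem
            by_contra hcon
            push_neg at hcon
            exact absurd (hmem hcon) (not_le.2 hx.2)
          rw [indicator_of_notMem hmem, hfneg x hx0]
      rw [h2, setIntegral_indicator measurableSet_Ioo]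
      have h3 : Ioo u s ∩ Ioo 0 s = Ioo 0 s := by
        refine inter_eq_right.2 fun x hx => ?_
        exact ⟨lt_of_le_of_lt hu hx.1, hx.2⟩
      rw [h3]
      exact integral_congr_ae hfmk
    · have hsub : Ioo u s ⊆ Ioo 0 s := fun x hx => ⟨lt_trans hu hx.1, hx.2⟩
      have hsplit : (Iic u ∩ Ioo 0 s) ∪ Ioo u s = Ioo 0 s := by
        ext x
        simp only [mem_union, mem_inter_iff, mem_Iic, mem_Ioo]
        constructor
        · rintro (⟨h1, h2, h3⟩ | ⟨h1, h2⟩)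
          · exact ⟨h2, h3⟩
          · exact ⟨lt_trans hu h1, h2⟩
        · rintro ⟨h1, h2⟩
          rcases le_or_gt x u with h3 | h3
          · exact Or.inl ⟨h3, h1, h2⟩
          · exact Or.inr ⟨h3, h2⟩
      have hdisj : Disjoint (Iic u ∩ Ioo 0 s) (Ioo u s) := by
        rw [Set.disjoint_left]
        rintro x ⟨hx1, -⟩ hx2
        exact absurd hx2.1 (not_lt.2 hx1)
      have hunion := setIntegral_union (μ := volume) (f := g') hdisj measurableSet_Ioo
        (hg'int.mono_set inter_subset_right) (hg'int.mono_set hsub)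
      rw [hsplit] at hunion
      have hfeq : ∫ x in Ioo u s, f x = ∫ x in Ioo u s, g' x :=
        integral_congr_ae (ae_restrict_of_ae_restrict_of_subset hsub hfmk)
      rw [hfeq, hunion]
      ring
  -- continuity and monotonicity of G
  have hGmono : Monotone G := fun a b hab =>
    setIntegral_mono_set hg_int.integrableOn (Eventually.of_forall hg0)
      ((Iic_subset_Iic.2 hab).eventuallyLE)
  have hIic_split : ∀ a b : ℝ, a ≤ b →
      (∫ x in Iic b, g x) = (∫ x in Iic a, g x) + ∫ x in Ioc a b, g x := by
    intro a b hab
    have hd : Disjoint (Iic a) (Ioc a b) := Iic_disjoint_Ioc le_rfl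
    have h := setIntegral_union (μ := volume) (f := g) hd
      measurableSet_Ioc hg_int.integrableOn hg_int.integrableOn
    rw [Iic_union_Ioc_eq_Iic hab] at h
    exact h
  have hGcont : Continuous G := by
    have hrepr : G = fun u => (∫ x in Iic (0:ℝ), g x) + ∫ x in (0:ℝ)..u, g x := by
      funext u
      rcases le_or_gt 0 u with hu | hu
      · rw [intervalIntegral.integral_of_le hu]
        simp only [hGdef]
        rw [hIic_split 0 u hu]
      · rw [intervalIntegral.integral_of_ge hu.le]
        simp only [hGdef]
        rw [hIic_split u 0 hu.le]
        ring
    rw [hrepr]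
    exact continuous_const.add
      (intervalIntegral.continuous_primitive (fun a b => hg_int.intervalIntegrable) 0)
  -- Stieltjes function associated to G and measure identification
  set GS : StieltjesFunction ℝ := ⟨G, hGmono, fun x => hGcont.continuousWithinAt⟩ with hGSdef
  have hνfin : ∫⁻ x, ENNReal.ofReal (g x) ∂volume ≠ ⊤ := hg_int.lintegral_lt_top.ne
  haveI : IsFiniteMeasure (volume.withDensity fun x => ENNReal.ofReal (g x)) :=
    isFiniteMeasure_withDensity hνfin
  have hGS_Ioc : ∀ a b : ℝ, a ≤ b → G b - G a = ∫ x in Ioc a b, g x := by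
    intro a b hab
    simp only [hGdef]
    rw [hIic_split a b hab]
    ring
  have hmeasure : GS.measure = volume.withDensity fun x => ENNReal.ofReal (g x) := by
    refine Measure.ext_of_Ioc _ _ fun a b hab => ?_
    rw [GS.measure_Ioc, withDensity_apply _ measurableSet_Ioc,
      ← ofReal_integral_eq_lintegral_ofReal hg_int.integrableOn (Eventually.of_forall hg0)]
    congr 1
    exact hGS_Ioc a b hab.le
  -- a.e. differentiability
  have hGd : ∀ᵐ x, HasDerivAt G (g x) x := by
    filter_upwards [GS.ae_hasDerivAt,
      Measure.rnDeriv_withDensity volume (hg_meas.ennreal_ofReal)] with x hx hrn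
    rw [hmeasure, hrn] at hx
    simpa [ENNReal.toReal_ofReal (hg0 x)] using hx
  have hτeq : τ = fun u => C * I - C * G u := funext fun u => by rw [hτG u]; ring
  have hderiv_ae : ∀ᵐ x, deriv τ x = -C * g x := by
    filter_upwards [hGd] with x hx
    have h1 : HasDerivAt (fun u => C * I - C * G u) (-(C * g x)) x :=
      (HasDerivAt.const_mul C hx).const_sub (C * I)
    rw [hτeq, h1.deriv]
    ring
  -- integrability of g times bounded measurable functions
  have hbd : ∀ (F : ℝ → ℝ), Measurable F → (∀ x, 0 ≤ F x) → (∀ x, F x ≤ 1) →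
      Integrable (fun x => g x * F x) volume := by
    intro F hFm hF0 hF1
    refine Integrable.mono hg_int ((hg_meas.mul hFm).aestronglyMeasurable)
      (Eventually.of_forall fun x => ?_)
    rw [Real.norm_eq_abs, Real.norm_eq_abs, abs_mul, abs_of_nonneg (hg0 x),
      abs_of_nonneg (hF0 x)]
    exact mul_le_of_le_one_right (hg0 x) (hF1 x)
  have hgK₁int : Integrable (fun x => g x * K₁ x) volume := hbd K₁ hK₁meas hK₁0 hK₁1
  have hgK₂int : Integrable (fun x => g x * K₂ x) volume := hbd K₂ hK₂meas hK₂0 hK₂1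
  set A₁ : ℝ := ∫ x in Ioo 0 s, g x * K₁ x with hA₁def
  set A₂ : ℝ := ∫ x in Ioo 0 s, g x * K₂ x with hA₂def
  have hglob : ∀ (F : ℝ → ℝ), (∫ x, g x * F x) = ∫ x in Ioo 0 s, g x * F x := by
    intro F
    have h : (∫ x, (Ioo 0 s).indicator (fun y => g y * F y) x)
        = ∫ x in Ioo 0 s, g x * F x := integral_indicator measurableSet_Ioo
    rw [← h]
    exact integral_congr_ae (Eventually.of_forall fun x => habsorb F x)
  -- survival function of μ₂
  have hIci : ∀ x : ℝ, (μ₂ (Ici x)).toReal = 1 - K₂ x := by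
    intro x
    have hx0 : μ₂ {x} = 0 := hac₂ (measure_singleton x)
    have h0 : μ₂ (Iio x) = μ₂ (Iic x) := by
      refine le_antisymm (measure_mono Iio_subset_Iic_self) ?_
      calc μ₂ (Iic x) = μ₂ (Iio x ∪ {x}) := by rw [Iio_union_right]
        _ ≤ μ₂ (Iio x) + μ₂ {x} := measure_union_le _ _
        _ = μ₂ (Iio x) := by rw [hx0, add_zero]
    have h1 : μ₂ (Ici x) = 1 - μ₂ (Iio x) := by
      rw [← compl_Iio]
      exact prob_compl_eq_one_sub measurableSet_Iio
    rw [h1, h0, hK₂ x, ENNReal.toReal_sub_of_le prob_le_one ENNReal.one_ne_top,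
      ENNReal.toReal_one]
  -- Fubini step
  set F : ℝ × ℝ → ℝ := fun p => {q : ℝ × ℝ | q.2 ≤ q.1}.indicator (fun q => g q.2) p
    with hFdef
  have hFmeas : Measurable F :=
    (hg_meas.comp measurable_snd).indicator (measurableSet_le measurable_snd measurable_fst)
  have hFx : ∀ u x : ℝ, F (u, x) = (Iic u).indicator g x := by
    intro u x
    by_cases h : x ≤ u <;> simp [hFdef, indicator, h]
  have hFu : ∀ u x : ℝ, F (u, x) = (Ici x).indicator (fun _ => g x) u := by
    intro u x
    by_cases h : x ≤ u <;> simp [hFdef, indicator, h]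
  have hGu_eq : ∀ u, (∫ x, F (u, x)) = G u := by
    intro u
    simp only [hFx]
    rw [integral_indicator measurableSet_Iic]
  have hGint2 : Integrable G μ₂ := by
    have h : G = fun u => I - τ u / C := funext fun u => by
      rw [hτG u]
      field_simp
      ring
    rw [h]
    exact (integrable_const I).sub (hτint.div_const C)
  have hFint : Integrable F (μ₂.prod volume) := by
    rw [integrable_prod_iff hFmeas.aestronglyMeasurable]
    constructor
    · refine Eventually.of_forall fun u => ?_
      simp only [hFx]
      exact (integrable_indicator_iff measurableSet_Iic).2 hg_int.integrableOn
    · have h : (fun u => ∫ x, ‖F (u, x)‖) = G := by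
        funext u
        rw [← hGu_eq u]
        refine integral_congr_ae (Eventually.of_forall fun x => ?_)
        have h0 : 0 ≤ F (u, x) := by
          rw [hFx]
          exact indicator_nonneg (fun y _ => hg0 y) x
        exact Real.norm_of_nonneg h0
      rw [h]
      exact hGint2
  have hswap : ∫ u, G u ∂μ₂ = ∫ x, g x * (1 - K₂ x) := by
    have h1 : ∫ u, G u ∂μ₂ = ∫ u, ∫ x, F (u, x) ∂volume ∂μ₂ :=
      integral_congr_ae (Eventually.of_forall fun u => (hGu_eq u).symm)
    have h2 := integral_integral_swap (f := fun u x => F (u, x)) hFint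
    rw [h1, h2]
    refine integral_congr_ae (Eventually.of_forall fun x => ?_)
    simp only [hFu]
    rw [integral_indicator_const (g x) measurableSet_Ici, measureReal_def, hIci x, smul_eq_mul, mul_comm]
  -- E[τ(X₂)]
  have hτint_eq : ∫ u, τ u ∂μ₂ = C * A₂ := by
    rw [hτeq]
    rw [integral_sub (integrable_const _) (hGint2.const_mul C), integral_const,
      measureReal_def, measure_univ, ENNReal.toReal_one, one_smul, integral_const_mul, hswap]
    have h2 : (fun x => g x * (1 - K₂ x)) = fun x => g x - g x * K₂ x :=
      funext fun x => by ring
    rw [h2, integral_sub hg_int hgK₂int, hglob K₂, ← hA₂def, ← hIdef]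
    ring
  -- the derivative integral
  have hder_eq : ∫ x in Ioi 0, deriv τ x * kV x = -C * ((A₁ - A₂) / c) := by
    have h1 : ∫ x in Ioi 0, deriv τ x * kV x = ∫ x in Ioi 0, -C * (g x * kV x) :=
      integral_congr_ae (ae_restrict_of_ae (hderiv_ae.mono fun x hx => by
        show deriv τ x * kV x = -C * (g x * kV x)
        rw [hx]; ring))
    have h2 : ∫ x in Ioi 0, -C * (g x * kV x) = -C * ∫ x in Ioi 0, g x * kV x :=
      integral_const_mul _ _
    have h3 : ∫ x in Ioi 0, g x * kV x = ∫ x in Ioo 0 s, g x * kV x := by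
      have ha : ∫ x in Ioi 0, g x * kV x
          = ∫ x in Ioi 0, (Ioo 0 s).indicator (fun y => g y * kV y) x :=
        setIntegral_congr_fun measurableSet_Ioi fun x _ => habsorb kV x
      have hsub2 : Ioi (0:ℝ) ∩ Ioo 0 s = Ioo 0 s :=
        inter_eq_right.2 fun x hx => hx.1
      rw [ha, setIntegral_indicator measurableSet_Ioo, hsub2]
    have h4 : ∫ x in Ioo 0 s, g x * kV x = (A₁ - A₂) / c := by
      have hpt : ∀ x : ℝ, g x * kV x = (g x * K₁ x - g x * K₂ x) / c := by
        intro x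
        rw [hkV x]
        ring
      rw [setIntegral_congr_fun measurableSet_Ioo fun x _ => hpt x]
      rw [integral_div, integral_sub hgK₁int.integrableOn hgK₂int.integrableOn]
    rw [h1, h2, h3, h4]
  -- left-hand side
  have hLHS : ∫ x in Ioo 0 s, ψ x * K₁ x * (-Real.log (K₁ x)) ^ γ = A₁ := by
    have hl1 : ∫ x in Ioo 0 s, ψ x * K₁ x * (-Real.log (K₁ x)) ^ γ
        = ∫ x in Ioo 0 s, f x * K₁ x :=
      setIntegral_congr_fun measurableSet_Ioo fun x _ => by
        show ψ x * K₁ x * (-Real.log (K₁ x)) ^ γ = f x * K₁ x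
        rw [hfdef]
        ring
    have hl2 : ∫ x in Ioo 0 s, f x * K₁ x = ∫ x in Ioo 0 s, g x * K₁ x :=
      integral_congr_ae (hfg_ae.mono fun x hx => by
        show f x * K₁ x = g x * K₁ x
        rw [hx])
    rw [hl1, hl2]
  rw [hLHS, hτint_eq, hder_eq, show E₁ - E₂ = -c by rw [hcdef]; ring]
  field_simp
  ring
end

section
/- Under the assumptions of the probabilistic mean value representation — X₁, X₂ nonnegative absolutely continuous random variables with X₁ ≤_st X₂, finite unequal means, K₁ the CDF of X₁ with support (0,s), X₂ supported in [0,s], ψ ≥ 0, and τ_γ^ψ(u) = (1/Γ(γ+1)) ∫_u^s ψ(x)(−ln K₁(x))^γ dx finite — one has the lower bound CPE_γ^ψ(X₁) ≥ E[τ_γ^ψ(X₂)]. -/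
open MeasureTheory Set Filter

/-- Under the assumptions of the probabilistic mean value representation
(`X₁ ≤_st X₂`, finite unequal means, etc.), one has the lower bound
`CPE_γ^ψ(X₁) ≥ E[τ_γ^ψ(X₂)]`. -/
theorem wfgcpe_ge_expectation_tau_of_st
    (s : ℝ) (hs : 0 < s)
    (μ₁ μ₂ : Measure ℝ) [IsProbabilityMeasure μ₁] [IsProbabilityMeasure μ₂]
    (hac₁ : μ₁ ≪ volume) (hac₂ : μ₂ ≪ volume)
    (hsupp₁ : μ₁ (Set.Ioo 0 s) = 1) (hsupp₂ : μ₂ (Set.Icc 0 s) = 1)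
    (K₁ K₂ : ℝ → ℝ)
    (hK₁ : ∀ x, K₁ x = (μ₁ (Set.Iic x)).toReal)
    (hK₂ : ∀ x, K₂ x = (μ₂ (Set.Iic x)).toReal)
    (hst : ∀ x, K₂ x ≤ K₁ x)
    (hmean₁ : Integrable (fun x : ℝ => x) μ₁) (hmean₂ : Integrable (fun x : ℝ => x) μ₂)
    (hne : (∫ x, x ∂μ₁) ≠ ∫ x, x ∂μ₂)
    (ψ : ℝ → ℝ) (hψ0 : ∀ x, 0 ≤ ψ x)
    (γ : ℝ) (hγ : 0 < γ)
    (τ : ℝ → ℝ)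
    (hτ : ∀ u, τ u = (1 / Real.Gamma (γ + 1)) *
      ∫ x in Set.Ioo u s, ψ x * (-Real.log (K₁ x)) ^ γ)
    (hτfin : IntegrableOn (fun x => ψ x * (-Real.log (K₁ x)) ^ γ) (Set.Ioo 0 s))
    (hτint : Integrable τ μ₂) :
    (1 / Real.Gamma (γ + 1)) *
        ∫ x in Set.Ioo 0 s, ψ x * K₁ x * (-Real.log (K₁ x)) ^ γ
      ≥ ∫ u, τ u ∂μ₂ := by
  set f : ℝ → ℝ := fun x => ψ x * (-Real.log (K₁ x)) ^ γ with hfdef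
  set ν : Measure ℝ := volume.restrict (Set.Ioo 0 s) with hνdef
  set c : ℝ := 1 / Real.Gamma (γ + 1) with hcdef
  set φ : ℝ → ENNReal := fun x => ENNReal.ofReal (f x) with hφdef
  have hΓpos : 0 < Real.Gamma (γ + 1) := Real.Gamma_pos_of_pos (by linarith)
  have hc0 : 0 ≤ c := by rw [hcdef]; positivity
  have hK₁0 : ∀ x, 0 ≤ K₁ x := fun x => by rw [hK₁]; exact ENNReal.toReal_nonneg
  have hK₁le : ∀ x, K₁ x ≤ 1 := by
    intro x; rw [hK₁]
    calc (μ₁ (Set.Iic x)).toReal ≤ (1 : ENNReal).toReal :=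
          ENNReal.toReal_mono ENNReal.one_ne_top prob_le_one
      _ = 1 := ENNReal.toReal_one
  have hf0 : ∀ x, 0 ≤ f x := by
    intro x
    have hlog : Real.log (K₁ x) ≤ 0 := Real.log_nonpos (hK₁0 x) (hK₁le x)
    exact mul_nonneg (hψ0 x) (Real.rpow_nonneg (by linarith) γ)
  have hK₁mono : Monotone K₁ := by
    intro a b hab; rw [hK₁, hK₁]
    exact ENNReal.toReal_mono (measure_ne_top _ _) (measure_mono (Set.Iic_subset_Iic.2 hab))
  have hK₁meas : Measurable K₁ := hK₁mono.measurable
  have hτfin' : Integrable f ν := hτfin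
  have hfm : AEStronglyMeasurable f ν := hτfin'.1
  have hfK₁int : Integrable (fun x => f x * K₁ x) ν := by
    refine hτfin'.mono (hfm.mul hK₁meas.aestronglyMeasurable) ?_
    filter_upwards with x
    rw [Real.norm_eq_abs, Real.norm_eq_abs, abs_of_nonneg (mul_nonneg (hf0 x) (hK₁0 x)),
      abs_of_nonneg (hf0 x)]
    exact mul_le_of_le_one_right (hf0 x) (hK₁le x)
  -- a.e. membership in `Ioo 0 s` for `μ₂`
  have h0 : μ₂ {(0 : ℝ)} = 0 := hac₂ (measure_singleton 0)
  have hs0 : μ₂ {s} = 0 := hac₂ (measure_singleton s)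
  have hcompl : μ₂ (Set.Icc 0 s)ᶜ = 0 := by
    rw [measure_compl measurableSet_Icc (measure_ne_top _ _), measure_univ, hsupp₂, tsub_self]
  have hae : ∀ᵐ u ∂μ₂, u ∈ Set.Ioo 0 s := by
    rw [ae_iff]
    have hsub : {u : ℝ | ¬u ∈ Set.Ioo 0 s} ⊆ (Set.Icc 0 s)ᶜ ∪ ({0} ∪ {s}) := by
      intro x hx
      simp only [Set.mem_setOf_eq, Set.mem_Ioo, not_and_or, not_lt] at hx
      by_cases hx0 : x = 0
      · exact Or.inr (Or.inl hx0)
      by_cases hxs : x = s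
      · exact Or.inr (Or.inr hxs)
      left
      simp only [Set.mem_compl_iff, Set.mem_Icc, not_and_or, not_le]
      rcases hx with h | h
      · exact Or.inl (lt_of_le_of_ne h hx0)
      · exact Or.inr (lt_of_le_of_ne h fun he => hxs he.symm)
    exact measure_mono_null hsub (measure_union_null hcompl (measure_union_null h0 hs0))
  set G : ℝ → ENNReal := fun u => ∫⁻ x, (Set.Ioi u).indicator φ x ∂ν with hGdef
  -- finiteness of G
  have hφfin : ∫⁻ x, φ x ∂ν < ⊤ := by
    have h := hτfin'.2
    rw [hasFiniteIntegral_iff_norm] at h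
    refine lt_of_le_of_lt (lintegral_mono fun x => ?_) h
    simp only [hφdef]
    exact ENNReal.ofReal_le_ofReal (le_abs_self _)
  have hGle : ∀ u, G u ≤ ∫⁻ x, φ x ∂ν := by
    intro u
    simp only [hGdef]
    rw [lintegral_indicator measurableSet_Ioi]
    exact lintegral_mono' Measure.restrict_le_self le_rfl
  have hGlt : ∀ u, G u < ⊤ := fun u => lt_of_le_of_lt (hGle u) hφfin
  -- τ u = c * (G u).toReal a.e.
  have hτ' : ∀ᵐ u ∂μ₂, τ u = c * (G u).toReal := by
    filter_upwards [hae] with u hu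
    have hsubset : Set.Ioo u s ⊆ Set.Ioo 0 s := Set.Ioo_subset_Ioo (le_of_lt hu.1) le_rfl
    have hres : ν.restrict (Set.Ioi u) = volume.restrict (Set.Ioo u s) := by
      rw [hνdef, Measure.restrict_restrict measurableSet_Ioi]
      congr 1
      ext x
      simp only [Set.mem_inter_iff, Set.mem_Ioi, Set.mem_Ioo]
      constructor
      · rintro ⟨h1, _, h3⟩; exact ⟨h1, h3⟩
      · rintro ⟨h1, h2⟩; exact ⟨h1, hu.1.trans h1, h2⟩
    have hGu : G u = ∫⁻ x in Set.Ioo u s, ENNReal.ofReal (f x) := by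
      simp only [hGdef]
      rw [lintegral_indicator measurableSet_Ioi, hres]
    have hint : ∫ x in Set.Ioo u s, f x = (G u).toReal := by
      rw [hGu, integral_eq_lintegral_of_nonneg_ae (ae_of_all _ hf0)
        (hfm.mono_measure (Measure.restrict_mono hsubset le_rfl))]
    rw [hτ u]
    congr 1
  -- measurability of (G ·).toReal via τ
  have hGae : AEStronglyMeasurable (fun u => (G u).toReal) μ₂ := by
    refine (hτint.1.const_mul (Real.Gamma (γ + 1))).congr ?_
    filter_upwards [hτ'] with u hu
    rw [hu, hcdef]
    field_simp
  have h2 : ∫ u, (G u).toReal ∂μ₂ = (∫⁻ u, G u ∂μ₂).toReal := by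
    rw [integral_eq_lintegral_of_nonneg_ae (ae_of_all _ fun u => ENNReal.toReal_nonneg) hGae]
    congr 1
    exact lintegral_congr fun u => ENNReal.ofReal_toReal (hGlt u).ne
  -- Fubini / Tonelli swap
  have hφm : AEMeasurable φ ν := ENNReal.measurable_ofReal.comp_aemeasurable hfm.aemeasurable
  have hswapmeas : AEMeasurable
      (Function.uncurry fun (a b : ℝ) => (Set.Ioi a).indicator φ b) (μ₂.prod ν) := by
    rw [Function.uncurry_def]
    have h2 : AEMeasurable (fun p : ℝ × ℝ => φ p.2) (μ₂.prod ν) :=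
      hφm.comp_quasiMeasurePreserving Measure.quasiMeasurePreserving_snd
    have hset : MeasurableSet {p : ℝ × ℝ | p.1 < p.2} :=
      measurableSet_lt measurable_fst measurable_snd
    have heq : (fun p : ℝ × ℝ => (Set.Ioi p.1).indicator φ p.2) =
        {p : ℝ × ℝ | p.1 < p.2}.indicator (fun p => φ p.2) := by
      funext p
      by_cases h : p.1 < p.2 <;> simp [Set.indicator_apply, h]
    rw [heq]
    exact h2.indicator hset
  have hswap : ∫⁻ u, G u ∂μ₂ = ∫⁻ x, φ x * μ₂ (Set.Iio x) ∂ν := by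
    have hsw := lintegral_lintegral_swap hswapmeas
    simp only [hGdef]
    rw [hsw]
    refine lintegral_congr fun x => ?_
    have heq : (fun u => (Set.Ioi u).indicator φ x) = (Set.Iio x).indicator (fun _ => φ x) := by
      funext u
      by_cases h : u < x <;> simp [Set.indicator_apply, h]
    rw [heq, lintegral_indicator measurableSet_Iio, setLIntegral_const]
  -- bound
  have hbound : ∫⁻ x, φ x * μ₂ (Set.Iio x) ∂ν ≤ ENNReal.ofReal (∫ x, f x * K₁ x ∂ν) := by
    rw [ofReal_integral_eq_lintegral_ofReal hfK₁int
      (ae_of_all _ fun x => mul_nonneg (hf0 x) (hK₁0 x))]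
    refine lintegral_mono fun x => ?_
    have h1 : μ₂ (Set.Iio x) ≤ ENNReal.ofReal (K₁ x) := by
      calc μ₂ (Set.Iio x) ≤ μ₂ (Set.Iic x) := measure_mono Set.Iio_subset_Iic_self
        _ = ENNReal.ofReal (K₂ x) := by rw [hK₂, ENNReal.ofReal_toReal (measure_ne_top _ _)]
        _ ≤ ENNReal.ofReal (K₁ x) := ENNReal.ofReal_le_ofReal (hst x)
    calc φ x * μ₂ (Set.Iio x) ≤ φ x * ENNReal.ofReal (K₁ x) := mul_le_mul_right h1 _
      _ = ENNReal.ofReal (f x * K₁ x) := by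
          simp only [hφdef]; exact (ENNReal.ofReal_mul (hf0 x)).symm
  -- assemble
  have h1 : ∫ u, τ u ∂μ₂ = c * ∫ u, (G u).toReal ∂μ₂ := by
    rw [← integral_const_mul]
    exact integral_congr_ae hτ'
  have hIeq : ∫ x in Set.Ioo 0 s, ψ x * K₁ x * (-Real.log (K₁ x)) ^ γ = ∫ x, f x * K₁ x ∂ν := by
    refine integral_congr_ae (ae_of_all _ fun x => ?_)
    simp only [hfdef]
    ring
  rw [ge_iff_le, h1, h2, hswap, hIeq]
  refine mul_le_mul_of_nonneg_left ?_ hc0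
  refine le_trans (ENNReal.toReal_mono ENNReal.ofReal_ne_top hbound) ?_
  rw [ENNReal.toReal_ofReal (integral_nonneg fun x => mul_nonneg (hf0 x) (hK₁0 x))]
end

section
/- Let X be a nonnegative absolutely continuous random variable with bounded support (0,s) and CDF K, let ξ ≥ 0, and take the weight ψ(x) = (ξ(x))^γ. Define CPE^ξ(X) = −∫_0^s ξ(x) K(x) ln K(x) dx. Then: if γ ≥ 1, CPE_γ^ψ(X) ≥ (s^{1−γ}/Γ(γ+1)) · (CPE^ξ(X))^γ, while if 0<γ≤1, CPE_γ^ψ(X) ≤ (s^{1−γ}/Γ(γ+1)) · (CPE^ξ(X))^γ. -/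
open MeasureTheory Set Filter

/-- For the weight `ψ(x) = (ξ(x))^γ`, with
`CPE^ξ(X) = −∫_0^s ξ(x) K(x) ln K(x) dx`, one has
`CPE_γ^ψ(X) ≥ (s^{1−γ}/Γ(γ+1)) (CPE^ξ(X))^γ` if `γ ≥ 1`, and the reverse
inequality if `0 < γ ≤ 1`. -/
theorem wfgcpe_bound_weighted_cpe
    (s : ℝ) (hs : 0 < s)
    (μ : Measure ℝ) [IsProbabilityMeasure μ] (hac : μ ≪ volume)
    (hsupp : μ (Set.Ioo 0 s) = 1)
    (K : ℝ → ℝ) (hK : ∀ x, K x = (μ (Set.Iic x)).toReal)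
    (ξ : ℝ → ℝ) (hξ0 : ∀ x, 0 ≤ ξ x)
    (γ : ℝ) (hγ : 0 < γ)
    (hfin : IntegrableOn (fun x => (ξ x) ^ γ * K x * (-Real.log (K x)) ^ γ)
      (Set.Ioo 0 s))
    (hfin' : IntegrableOn (fun x => ξ x * K x * Real.log (K x)) (Set.Ioo 0 s)) :
    (1 ≤ γ →
      (1 / Real.Gamma (γ + 1)) *
          ∫ x in Set.Ioo 0 s, (ξ x) ^ γ * K x * (-Real.log (K x)) ^ γ
        ≥ (s ^ (1 - γ) / Real.Gamma (γ + 1)) *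
            (-∫ x in Set.Ioo 0 s, ξ x * K x * Real.log (K x)) ^ γ)
    ∧ (γ ≤ 1 →
      (1 / Real.Gamma (γ + 1)) *
          ∫ x in Set.Ioo 0 s, (ξ x) ^ γ * K x * (-Real.log (K x)) ^ γ
        ≤ (s ^ (1 - γ) / Real.Gamma (γ + 1)) *
            (-∫ x in Set.Ioo 0 s, ξ x * K x * Real.log (K x)) ^ γ) := by
  set ν := volume.restrict (Set.Ioo 0 s) with hν
  haveI : NeZero ν := ⟨by
    simp [hν, Measure.restrict_eq_zero, Real.volume_Ioo, hs,
      ENNReal.ofReal_eq_zero, not_le]⟩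
  set f : ℝ → ℝ := fun x => ξ x * K x * (-Real.log (K x)) with hf
  have hK0 : ∀ x, 0 ≤ K x := fun x => by rw [hK]; exact ENNReal.toReal_nonneg
  have hK1 : ∀ x, K x ≤ 1 := by
    intro x
    rw [hK]
    have : μ (Set.Iic x) ≤ 1 := prob_le_one
    exact ENNReal.toReal_le_of_le_ofReal one_pos.le (by simpa using this)
  have hlog : ∀ x, 0 ≤ -Real.log (K x) := fun x =>
    neg_nonneg.2 (Real.log_nonpos (hK0 x) (hK1 x))
  have hf0 : ∀ x, 0 ≤ f x := fun x =>
    mul_nonneg (mul_nonneg (hξ0 x) (hK0 x)) (hlog x)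
  have hfi : Integrable f ν := by
    have := hfin'.neg
    refine this.congr (Filter.Eventually.of_forall fun x => ?_)
    simp [hf]
  have hfm : AEStronglyMeasurable (fun x => f x ^ γ) ν :=
    (Real.continuous_rpow_const hγ.le).comp_aestronglyMeasurable hfi.1
  -- f^γ expansion
  have hfpow : ∀ x, f x ^ γ = ξ x ^ γ * K x ^ γ * (-Real.log (K x)) ^ γ := by
    intro x
    rw [Real.mul_rpow (mul_nonneg (hξ0 x) (hK0 x)) (hlog x),
      Real.mul_rpow (hξ0 x) (hK0 x)]
  have hInn : (-∫ x in Set.Ioo 0 s, ξ x * K x * Real.log (K x)) = ∫ x, f x ∂ν := by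
    rw [← integral_neg]
    exact integral_congr_ae (Filter.Eventually.of_forall fun x => by simp [hf])
  set I := ∫ x, f x ∂ν with hI
  have hI0 : 0 ≤ I := integral_nonneg hf0
  have havg : ⨍ x, f x ∂ν = s⁻¹ * I := by
    rw [average_eq, hν]
    simp [Real.volume_Ioo, hs.le, smul_eq_mul]
    left; rfl
  have hΓ : 0 < Real.Gamma (γ + 1) := Real.Gamma_pos_of_pos (by linarith)
  have hνuniv : ν Set.univ = ENNReal.ofReal s := by
    rw [hν]; simp [Real.volume_Ioo]
  constructor
  · -- γ ≥ 1
    intro h1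
    -- pointwise: f^γ ≤ integrand
    have hpt : ∀ x, f x ^ γ ≤ ξ x ^ γ * K x * (-Real.log (K x)) ^ γ := by
      intro x
      rw [hfpow]
      have hKle : K x ^ γ ≤ K x := by
        rcases eq_or_lt_of_le (hK0 x) with h | h
        · rw [← h, Real.zero_rpow hγ.ne']
        · calc K x ^ γ ≤ K x ^ (1:ℝ) :=
                Real.rpow_le_rpow_of_exponent_ge h (hK1 x) h1
            _ = K x := Real.rpow_one _
      exact mul_le_mul_of_nonneg_right
        (mul_le_mul_of_nonneg_left hKle (Real.rpow_nonneg (hξ0 x) γ))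
        (Real.rpow_nonneg (hlog x) γ)
    have hgi : Integrable (fun x => f x ^ γ) ν := by
      refine hfin.mono' hfm (Filter.Eventually.of_forall fun x => ?_)
      rw [Real.norm_eq_abs, abs_of_nonneg (Real.rpow_nonneg (hf0 x) γ)]
      exact hpt x
    have hjensen := (convexOn_rpow h1).map_average_le
      (Real.continuous_rpow_const hγ.le).continuousOn isClosed_Ici
      (Filter.Eventually.of_forall fun x => hf0 x) hfi hgi
    rw [havg] at hjensen
    have havg2 : ⨍ x, f x ^ γ ∂ν = s⁻¹ * ∫ x, f x ^ γ ∂ν := by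
      rw [average_eq]; simp [hνuniv, hs.le, smul_eq_mul]
      left; rw [measureReal_def, hνuniv, ENNReal.toReal_ofReal hs.le]
    rw [havg2] at hjensen
    have hmul : (s⁻¹ * I) ^ γ = s⁻¹ ^ γ * I ^ γ :=
      Real.mul_rpow (inv_nonneg.2 hs.le) hI0
    rw [hmul] at hjensen
    -- s^{1-γ} * I^γ ≤ ∫ f^γ
    have hsp : s ^ (1 - γ) = s * s⁻¹ ^ γ := by
      rw [Real.inv_rpow hs.le, ← Real.rpow_neg hs.le,
        show (1 - γ) = 1 + (-γ) by ring, Real.rpow_add hs, Real.rpow_one]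
    have key : s ^ (1 - γ) * I ^ γ ≤ ∫ x, f x ^ γ ∂ν := by
      calc s ^ (1 - γ) * I ^ γ = s * (s⁻¹ ^ γ * I ^ γ) := by rw [hsp]; ring
        _ ≤ s * (s⁻¹ * ∫ x, f x ^ γ ∂ν) := mul_le_mul_of_nonneg_left hjensen hs.le
        _ = ∫ x, f x ^ γ ∂ν := by field_simp
    have hmono : ∫ x, f x ^ γ ∂ν ≤
        ∫ x in Set.Ioo 0 s, ξ x ^ γ * K x * (-Real.log (K x)) ^ γ :=
      integral_mono hgi hfin hpt
    rw [ge_iff_le, hInn]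
    calc s ^ (1 - γ) / Real.Gamma (γ + 1) * I ^ γ
        = (Real.Gamma (γ + 1))⁻¹ * (s ^ (1 - γ) * I ^ γ) := by ring
      _ ≤ (Real.Gamma (γ + 1))⁻¹ *
          ∫ x in Set.Ioo 0 s, ξ x ^ γ * K x * (-Real.log (K x)) ^ γ := by
          exact mul_le_mul_of_nonneg_left (key.trans hmono) (inv_nonneg.2 hΓ.le)
      _ = (1 / Real.Gamma (γ + 1)) *
          ∫ x in Set.Ioo 0 s, ξ x ^ γ * K x * (-Real.log (K x)) ^ γ := by ring
  · intro h1
    have hpt : ∀ x, ξ x ^ γ * K x * (-Real.log (K x)) ^ γ ≤ f x ^ γ := by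
      intro x
      rw [hfpow]
      have hKle : K x ≤ K x ^ γ := by
        rcases eq_or_lt_of_le (hK0 x) with h | h
        · rw [← h, Real.zero_rpow hγ.ne']
        · calc K x = K x ^ (1:ℝ) := (Real.rpow_one _).symm
            _ ≤ K x ^ γ := Real.rpow_le_rpow_of_exponent_ge h (hK1 x) h1
      exact mul_le_mul_of_nonneg_right
        (mul_le_mul_of_nonneg_left hKle (Real.rpow_nonneg (hξ0 x) γ))
        (Real.rpow_nonneg (hlog x) γ)
    have hgi : Integrable (fun x => f x ^ γ) ν := by
      have hb : Integrable (fun x => 1 + f x) ν := (integrable_const 1).add hfi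
      refine hb.mono' hfm (Filter.Eventually.of_forall fun x => ?_)
      rw [Real.norm_eq_abs, abs_of_nonneg (Real.rpow_nonneg (hf0 x) γ)]
      rcases le_or_gt (f x) 1 with h | h
      · have := Real.rpow_le_one (hf0 x) h hγ.le
        linarith [hf0 x]
      · have : f x ^ γ ≤ f x ^ (1:ℝ) :=
          Real.rpow_le_rpow_of_exponent_le h.le h1
        rw [Real.rpow_one] at this
        linarith
    have hjensen := (Real.concaveOn_rpow hγ.le h1).le_map_average
      (Real.continuous_rpow_const hγ.le).continuousOn isClosed_Ici
      (Filter.Eventually.of_forall fun x => hf0 x) hfi hgi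
    rw [havg] at hjensen
    have havg2 : ⨍ x, f x ^ γ ∂ν = s⁻¹ * ∫ x, f x ^ γ ∂ν := by
      rw [average_eq]; simp [hνuniv, hs.le, smul_eq_mul]
      left; rw [measureReal_def, hνuniv, ENNReal.toReal_ofReal hs.le]
    rw [havg2] at hjensen
    have hmul : (s⁻¹ * I) ^ γ = s⁻¹ ^ γ * I ^ γ :=
      Real.mul_rpow (inv_nonneg.2 hs.le) hI0
    rw [hmul] at hjensen
    have hsp : s ^ (1 - γ) = s * s⁻¹ ^ γ := by
      rw [Real.inv_rpow hs.le, ← Real.rpow_neg hs.le,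
        show (1 - γ) = 1 + (-γ) by ring, Real.rpow_add hs, Real.rpow_one]
    have key : (∫ x, f x ^ γ ∂ν) ≤ s ^ (1 - γ) * I ^ γ := by
      calc (∫ x, f x ^ γ ∂ν) = s * (s⁻¹ * ∫ x, f x ^ γ ∂ν) := by field_simp
        _ ≤ s * (s⁻¹ ^ γ * I ^ γ) := mul_le_mul_of_nonneg_left hjensen hs.le
        _ = s ^ (1 - γ) * I ^ γ := by rw [hsp]; ring
    have hmono : (∫ x in Set.Ioo 0 s, ξ x ^ γ * K x * (-Real.log (K x)) ^ γ)
        ≤ ∫ x, f x ^ γ ∂ν := integral_mono hfin hgi hpt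
    rw [hInn]
    calc (1 / Real.Gamma (γ + 1)) *
          ∫ x in Set.Ioo 0 s, ξ x ^ γ * K x * (-Real.log (K x)) ^ γ
        = (Real.Gamma (γ + 1))⁻¹ *
          ∫ x in Set.Ioo 0 s, ξ x ^ γ * K x * (-Real.log (K x)) ^ γ := by ring
      _ ≤ (Real.Gamma (γ + 1))⁻¹ * (s ^ (1 - γ) * I ^ γ) :=
          mul_le_mul_of_nonneg_left (hmono.trans key) (inv_nonneg.2 hΓ.le)
      _ = s ^ (1 - γ) / Real.Gamma (γ + 1) * I ^ γ := by ring
end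

section
/- Let X be an absolutely continuous random variable with support (0,s) and CDF K, and let γ>0 and ψ ≥ 0. Then CPE_γ^ψ(X) ≥ (1/Γ(γ+1)) ∫_0^s ψ(x) K(x) (1 − K(x))^γ dx. -/
open MeasureTheory Set Filter

/-- `CPE_γ^ψ(X) ≥ (1/Γ(γ+1)) ∫_0^s ψ(x) K(x) (1 − K(x))^γ dx`. -/
theorem wfgcpe_ge_survival_bound
    (s : ℝ) (hs : 0 < s)
    (μ : Measure ℝ) [IsProbabilityMeasure μ] (hac : μ ≪ volume)
    (hsupp : μ (Set.Ioo 0 s) = 1)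
    (K : ℝ → ℝ) (hK : ∀ x, K x = (μ (Set.Iic x)).toReal)
    (ψ : ℝ → ℝ) (hψ0 : ∀ x, 0 ≤ ψ x)
    (γ : ℝ) (hγ : 0 < γ)
    (hfin : IntegrableOn (fun x => ψ x * K x * (-Real.log (K x)) ^ γ) (Set.Ioo 0 s)) :
    (1 / Real.Gamma (γ + 1)) *
        ∫ x in Set.Ioo 0 s, ψ x * K x * (-Real.log (K x)) ^ γ
      ≥ (1 / Real.Gamma (γ + 1)) *
        ∫ x in Set.Ioo 0 s, ψ x * K x * (1 - K x) ^ γ := by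
  have hK0 : ∀ x, 0 ≤ K x := fun x => by rw [hK x]; exact ENNReal.toReal_nonneg
  have hK1 : ∀ x, K x ≤ 1 := fun x => by
    rw [hK x]; exact (ENNReal.toReal_le_of_le_ofReal one_pos.le (by simpa using prob_le_one))
  have hpt : ∀ x, ψ x * K x * (1 - K x) ^ γ ≤ ψ x * K x * (-Real.log (K x)) ^ γ := by
    intro x
    rcases eq_or_lt_of_le (hK0 x) with h0 | h0
    · simp [← h0]
    · have hlog : 1 - K x ≤ -Real.log (K x) := by
        have := Real.log_le_sub_one_of_pos h0
        linarith
      have : (1 - K x) ^ γ ≤ (-Real.log (K x)) ^ γ :=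
        Real.rpow_le_rpow (by linarith [hK1 x]) hlog hγ.le
      exact mul_le_mul_of_nonneg_left this (mul_nonneg (hψ0 x) (hK0 x))
  have hfnn : ∀ x, 0 ≤ ψ x * K x * (-Real.log (K x)) ^ γ := by
    intro x
    have : 0 ≤ -Real.log (K x) := by
      have := Real.log_nonpos (hK0 x) (hK1 x); linarith
    exact mul_nonneg (mul_nonneg (hψ0 x) (hK0 x)) (Real.rpow_nonneg this γ)
  have hΓ : 0 ≤ 1 / Real.Gamma (γ + 1) :=
    le_of_lt (div_pos one_pos (Real.Gamma_pos_of_pos (by linarith)))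
  have hIle : (∫ x in Set.Ioo 0 s, ψ x * K x * (1 - K x) ^ γ)
      ≤ ∫ x in Set.Ioo 0 s, ψ x * K x * (-Real.log (K x)) ^ γ := by
    by_cases hg : IntegrableOn (fun x => ψ x * K x * (1 - K x) ^ γ) (Set.Ioo 0 s)
    · exact setIntegral_mono_on hg hfin measurableSet_Ioo (fun x _ => hpt x)
    · rw [integral_undef hg]
      exact setIntegral_nonneg measurableSet_Ioo (fun x _ => hfnn x)
  exact mul_le_mul_of_nonneg_left hIle hΓ
end

section
/- Let X be an absolutely continuous random variable with support (0,s), CDF K, and finite mean μ = E(X) < +∞, and let γ>0. If the weight function ψ ≥ 0 is nonincreasing, then CPE_γ^ψ(X) ≥ τ_γ^ψ(μ), where τ_γ^ψ(u) = (1/Γ(γ+1)) ∫_u^s ψ(x)(−ln K(x))^γ dx. -/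
open MeasureTheory Set Filter

/-- If the nonnegative weight `ψ` is nonincreasing, then
`CPE_γ^ψ(X) ≥ τ_γ^ψ(μ)` where `μ = E(X)` is the (finite) mean and
`τ_γ^ψ(u) = (1/Γ(γ+1)) ∫_u^s ψ(x)(−ln K(x))^γ dx`. -/
theorem wfgcpe_ge_tau_at_mean
    (s : ℝ) (hs : 0 < s)
    (μ : Measure ℝ) [IsProbabilityMeasure μ] (hac : μ ≪ volume)
    (hsupp : μ (Set.Ioo 0 s) = 1)
    (K : ℝ → ℝ) (hK : ∀ x, K x = (μ (Set.Iic x)).toReal)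
    (hmean : Integrable (fun x : ℝ => x) μ)
    (ψ : ℝ → ℝ) (hψ0 : ∀ x, 0 ≤ ψ x) (hψanti : Antitone ψ)
    (γ : ℝ) (hγ : 0 < γ)
    (hfin : IntegrableOn (fun x => ψ x * K x * (-Real.log (K x)) ^ γ) (Set.Ioo 0 s)) :
    (1 / Real.Gamma (γ + 1)) *
        ∫ x in Set.Ioo 0 s, ψ x * K x * (-Real.log (K x)) ^ γ
      ≥ (1 / Real.Gamma (γ + 1)) *
        ∫ x in Set.Ioo (∫ x, x ∂μ) s, ψ x * (-Real.log (K x)) ^ γ := by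
  set m := ∫ x, x ∂μ with hm
  -- basic facts about K
  have hK0 : ∀ x, 0 ≤ K x := fun x => by rw [hK]; exact ENNReal.toReal_nonneg
  have hK1 : ∀ x, K x ≤ 1 := by
    intro x
    rw [hK]
    have h1 : μ (Set.Iic x) ≤ 1 := prob_le_one
    simpa using ENNReal.toReal_mono ENNReal.one_ne_top h1
  have hKmono : Monotone K := by
    intro a b hab
    rw [hK, hK]
    exact ENNReal.toReal_mono (measure_ne_top μ _)
      (measure_mono (Set.Iic_subset_Iic.2 hab))
  have hKmeas : Measurable K := hKmono.measurable
  have hψmeas : Measurable ψ := hψanti.measurable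
  -- the function g
  set g : ℝ → ℝ := fun x => (-Real.log (K x)) ^ γ with hg
  have hlog0 : ∀ x, 0 ≤ -Real.log (K x) := fun x =>
    neg_nonneg.2 (Real.log_nonpos (hK0 x) (hK1 x))
  have hg0 : ∀ x, 0 ≤ g x := fun x => Real.rpow_nonneg (hlog0 x) γ
  have hgmeas : Measurable g :=
    (Real.continuous_rpow_const hγ.le).measurable.comp
      ((Real.measurable_log.comp hKmeas).neg)
  -- a.e. membership in (0, s)
  have hcompl : μ ((Set.Ioo 0 s)ᶜ) = 0 := by
    have h := measure_compl (measurableSet_Ioo : MeasurableSet (Set.Ioo 0 s))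
      (measure_ne_top μ _)
    rw [hsupp, measure_univ] at h
    simpa using h
  have haemem : ∀ᵐ x ∂μ, x ∈ Set.Ioo 0 s := by
    rw [ae_iff]
    exact hcompl
  have haenn : 0 ≤ᵐ[μ] fun x : ℝ => x := haemem.mono fun x hx => hx.1.le
  -- positivity of the mean
  have hm_pos : 0 < m := by
    rcases (integral_nonneg_of_ae haenn).lt_or_eq with h | h
    · exact h
    · exfalso
      have hz : (fun x : ℝ => x) =ᵐ[μ] 0 :=
        (integral_eq_zero_iff_of_nonneg_ae haenn hmean).1 h.symm
      obtain ⟨x, hx0, hxmem⟩ := (hz.and haemem).exists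
      simp only [Pi.zero_apply] at hx0
      exact absurd hxmem.1 (by simp [hx0])
  -- the mean is less than s
  have hms : m < s := by
    have hint : Integrable (fun x : ℝ => s - x) μ := (integrable_const s).sub hmean
    have hval : ∫ x, (s - x) ∂μ = s - m := by
      rw [integral_sub (integrable_const s) hmean, integral_const, probReal_univ]
      simp [hm]
    have hnn : 0 ≤ᵐ[μ] fun x : ℝ => s - x :=
      haemem.mono fun x hx => sub_nonneg.2 hx.2.le
    have h0 : 0 ≤ s - m := hval ▸ integral_nonneg_of_ae hnn
    rcases h0.lt_or_eq with h | h
    · linarith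
    · exfalso
      have hz : (fun x : ℝ => s - x) =ᵐ[μ] 0 :=
        (integral_eq_zero_iff_of_nonneg_ae hnn hint).1 (by rw [hval, ← h])
      obtain ⟨x, hx0, hxmem⟩ := (hz.and haemem).exists
      simp only [Pi.zero_apply] at hx0
      have : x = s := by linarith
      exact absurd hxmem.2 (by simp [this])
  -- K m > 0
  have hKm_pos : 0 < K m := by
    rw [hK]
    refine ENNReal.toReal_pos (fun h0 => ?_) (measure_ne_top μ _)
    have hae_gt : ∀ᵐ x ∂μ, m < x := by
      rw [ae_iff]
      simp only [not_lt]; exact h0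
    have hint : Integrable (fun x : ℝ => x - m) μ := hmean.sub (integrable_const m)
    have hval : ∫ x, (x - m) ∂μ = 0 := by
      rw [integral_sub hmean (integrable_const m), integral_const, probReal_univ]
      simp [hm]
    have hz : (fun x : ℝ => x - m) =ᵐ[μ] 0 :=
      (integral_eq_zero_iff_of_nonneg_ae
        (hae_gt.mono fun x hx => sub_nonneg.2 hx.le) hint).1 hval
    obtain ⟨x, hx0, hxgt⟩ := (hz.and hae_gt).exists
    simp only [Pi.zero_apply] at hx0
    have : x = m := by linarith
    exact absurd hxgt (by simp [this])
  -- pointwise monotonicity facts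
  have hf_le : ∀ x, m ≤ x → ψ x * g x ≤ ψ m * g m := by
    intro x hx
    have hKx : 0 < K x := lt_of_lt_of_le hKm_pos (hKmono hx)
    have hlog : -Real.log (K x) ≤ -Real.log (K m) :=
      neg_le_neg (Real.log_le_log hKm_pos (hKmono hx))
    have hgle : g x ≤ g m := Real.rpow_le_rpow (hlog0 x) hlog hγ.le
    exact mul_le_mul (hψanti hx) hgle (hg0 x) (hψ0 m)
  have hf_ge : ∀ x, 0 < K x → x ≤ m → ψ m * g m ≤ ψ x * g x := by
    intro x hKx hx
    have hlog : -Real.log (K m) ≤ -Real.log (K x) :=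
      neg_le_neg (Real.log_le_log hKx (hKmono hx))
    have hgle : g m ≤ g x := Real.rpow_le_rpow (hlog0 m) hlog hγ.le
    exact mul_le_mul (hψanti hx) hgle (hg0 m) (hψ0 x)
  -- layer cake: m = ∫_{(0,s)} (1 - K)
  have hμIoi : ∀ t, (μ (Set.Ioi t)).toReal = 1 - K t := by
    intro t
    have hc := measure_compl (measurableSet_Iic : MeasurableSet (Set.Iic t))
      (measure_ne_top μ _)
    rw [measure_univ, Set.compl_Iic] at hc
    rw [hc, ENNReal.toReal_sub_of_le prob_le_one ENNReal.one_ne_top, hK]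
    simp
  have hlayer : m = ∫ t in Set.Ioi (0:ℝ), (μ (Set.Ioi t)).toReal := by
    have := hmean.integral_eq_integral_meas_lt haenn
    simpa [Set.Ioi, Measure.real] using this
  -- integrability of 1 - K on bounded intervals
  have hbdd : ∀ (h : ℝ → ℝ) (A : Set ℝ), MeasurableSet A → volume A ≠ ⊤ →
      Measurable h → ∀ (C : ℝ), (∀ x ∈ A, |h x| ≤ C) → IntegrableOn h A := by
    intro h A hA hvol hmeas C hC
    refine Measure.integrableOn_of_bounded (M := C) hvol hmeas.aestronglyMeasurable ?_
    refine (ae_restrict_iff' hA).2 (Eventually.of_forall fun x hx => ?_)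
    simpa [Real.norm_eq_abs] using hC x hx
  have h1K_meas : Measurable fun x => 1 - K x := measurable_const.sub hKmeas
  have h1K_bd : ∀ x, |1 - K x| ≤ 1 := by
    intro x
    rw [abs_le]
    constructor <;> nlinarith [hK0 x, hK1 x]
  have hint_1K_0s : IntegrableOn (fun x => 1 - K x) (Set.Ioo 0 s) := by
    refine hbdd _ _ measurableSet_Ioo ?_ h1K_meas 1 fun x _ => h1K_bd x
    simp [Real.volume_Ioo]
  have hF0 : ∀ t ∈ Set.Ici s, (μ (Set.Ioi t)).toReal = 0 := by
    intro t ht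
    have : μ (Set.Ioi t) = 0 := by
      refine measure_mono_null (fun x hx => ?_) hcompl
      intro hmem
      exact absurd hmem.2 (not_lt.2 (le_trans ht (le_of_lt hx)))
    simp [this]
  have hunion : Set.Ioo (0:ℝ) s ∪ Set.Ici s = Set.Ioi 0 := by
    ext x
    simp only [Set.mem_union, Set.mem_Ioo, Set.mem_Ici, Set.mem_Ioi]
    constructor
    · rintro (⟨h, _⟩ | h)
      · exact h
      · exact lt_of_lt_of_le hs h
    · intro hx
      rcases lt_or_ge x s with h | h
      · exact Or.inl ⟨hx, h⟩
      · exact Or.inr h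
  have hFcongr : ∫ t in Set.Ioo (0:ℝ) s, (μ (Set.Ioi t)).toReal
      = ∫ t in Set.Ioo (0:ℝ) s, (1 - K t) :=
    setIntegral_congr_fun measurableSet_Ioo fun t _ => hμIoi t
  have hmean_eq : m = ∫ t in Set.Ioo (0:ℝ) s, (1 - K t) := by
    rw [hlayer, ← hunion,
      setIntegral_union (Set.disjoint_left.mpr fun x hx hx2 => hx.2.not_ge hx2)
        measurableSet_Ici
        (by rw [IntegrableOn]
            refine (hint_1K_0s.congr_fun (fun t ht => (hμIoi t).symm) measurableSet_Ioo))
        ((integrableOn_zero).congr_fun (fun t ht => (hF0 t ht).symm) measurableSet_Ici)]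
    rw [setIntegral_congr_fun measurableSet_Ici hF0]
    simp [hFcongr]
  -- split: Ioo 0 s = Ioo 0 m ∪ Ico m s
  have hsplitset : Set.Ioo (0:ℝ) m ∪ Set.Ico m s = Set.Ioo 0 s :=
    Set.Ioo_union_Ico_eq_Ioo hm_pos hms.le
  have hdisj : Disjoint (Set.Ioo (0:ℝ) m) (Set.Ico m s) :=
    Set.disjoint_left.mpr fun x hx hx2 => hx.2.not_ge hx2.1
  have hsub1 : Set.Ioo (0:ℝ) m ⊆ Set.Ioo 0 s := fun x hx => ⟨hx.1, hx.2.trans hms⟩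
  have hsub2 : Set.Ico m s ⊆ Set.Ioo 0 s := fun x hx => ⟨hm_pos.trans_le hx.1, hx.2⟩
  have hsub3 : Set.Ioo m s ⊆ Set.Ioo 0 s := fun x hx => ⟨hm_pos.trans hx.1, hx.2⟩
  -- the key balance equality
  set c := ∫ x in Set.Ioo (0:ℝ) m, K x with hc
  have hint_K_0m : IntegrableOn K (Set.Ioo 0 m) := by
    refine hbdd _ _ measurableSet_Ioo ?_ hKmeas 1 fun x _ => ?_
    · simp [Real.volume_Ioo]
    · rw [abs_le]; exact ⟨by linarith [hK0 x], hK1 x⟩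
  have hint_1K_0m : IntegrableOn (fun x => 1 - K x) (Set.Ioo 0 m) :=
    hint_1K_0s.mono_set hsub1
  have hint_1K_ms : IntegrableOn (fun x => 1 - K x) (Set.Ioo m s) :=
    hint_1K_0s.mono_set hsub3
  have hbal : ∫ x in Set.Ioo m s, (1 - K x) = c := by
    have h1 : ∫ x in Set.Ioo (0:ℝ) s, (1 - K x)
        = (∫ x in Set.Ioo (0:ℝ) m, (1 - K x)) + ∫ x in Set.Ico m s, (1 - K x) := by
      rw [← hsplitset, setIntegral_union hdisj measurableSet_Ico hint_1K_0m
        (hint_1K_0s.mono_set hsub2)]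
    have h2 : ∫ x in Set.Ico m s, (1 - K x) = ∫ x in Set.Ioo m s, (1 - K x) :=
      integral_Ico_eq_integral_Ioo
    have h3 : ∫ x in Set.Ioo (0:ℝ) m, (1 - K x) = m - c := by
      rw [integral_sub (integrableOn_const (C := (1:ℝ)) (s := Set.Ioo (0:ℝ) m) (μ := volume) (by simp [Real.volume_Ioo]))
        hint_K_0m]
      simp [Real.volume_real_Ioo, hm_pos.le, hc]
    rw [h1, h2, h3] at hmean_eq
    linarith
  -- integrability of the main integrands on the pieces
  have hint_Kf_0m : IntegrableOn (fun x => ψ x * K x * g x) (Set.Ioo 0 m) :=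
    hfin.mono_set hsub1
  have hint_Kf_ms : IntegrableOn (fun x => ψ x * K x * g x) (Set.Ioo m s) :=
    hfin.mono_set hsub3
  have hint_Kf_Ico : IntegrableOn (fun x => ψ x * K x * g x) (Set.Ico m s) :=
    hfin.mono_set hsub2
  have hfmeas : Measurable fun x => ψ x * g x := hψmeas.mul hgmeas
  have hfbd_ms : ∀ x ∈ Set.Ioo m s, |ψ x * g x| ≤ ψ m * g m := by
    intro x hx
    rw [abs_of_nonneg (mul_nonneg (hψ0 x) (hg0 x))]
    exact hf_le x hx.1.le
  have hint_f_ms : IntegrableOn (fun x => ψ x * g x) (Set.Ioo m s) := by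
    refine hbdd _ _ measurableSet_Ioo ?_ hfmeas (ψ m * g m) hfbd_ms
    simp [Real.volume_Ioo]
  have hint_1Kf_ms : IntegrableOn (fun x => (1 - K x) * (ψ x * g x)) (Set.Ioo m s) := by
    exact IntegrableOn.congr_fun (hint_f_ms.sub hint_Kf_ms) (fun x _ => by simp only [Pi.sub_apply]; ring) measurableSet_Ioo
  -- inequality A: f m * c ≤ ∫_{(0,m)} ψ K g
  have hA : ψ m * g m * c ≤ ∫ x in Set.Ioo (0:ℝ) m, ψ x * K x * g x := by
    have hpt : ∀ x ∈ Set.Ioo (0:ℝ) m, K x * (ψ m * g m) ≤ ψ x * K x * g x := by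
      intro x hx
      rcases (hK0 x).lt_or_eq with hKx | hKx
      · have := hf_ge x hKx hx.2.le
        calc K x * (ψ m * g m) ≤ K x * (ψ x * g x) :=
              mul_le_mul_of_nonneg_left this (hK0 x)
          _ = ψ x * K x * g x := by ring
      · rw [← hKx]; ring_nf; simp [← hKx]
    have hintl : IntegrableOn (fun x => K x * (ψ m * g m)) (Set.Ioo 0 m) :=
      hint_K_0m.mul_const _
    have := setIntegral_mono_on hintl hint_Kf_0m measurableSet_Ioo hpt
    calc ψ m * g m * c = ∫ x in Set.Ioo (0:ℝ) m, K x * (ψ m * g m) := by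
          rw [integral_mul_const]; ring
      _ ≤ _ := this
  -- inequality B: ∫_{(m,s)} (1-K) f ≤ f m * c
  have hB : ∫ x in Set.Ioo m s, (1 - K x) * (ψ x * g x) ≤ ψ m * g m * c := by
    have hpt : ∀ x ∈ Set.Ioo m s,
        (1 - K x) * (ψ x * g x) ≤ (1 - K x) * (ψ m * g m) := by
      intro x hx
      exact mul_le_mul_of_nonneg_left (hf_le x hx.1.le) (by linarith [hK1 x])
    have hintr : IntegrableOn (fun x => (1 - K x) * (ψ m * g m)) (Set.Ioo m s) :=
      hint_1K_ms.mul_const _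
    have h := setIntegral_mono_on hint_1Kf_ms hintr measurableSet_Ioo hpt
    calc ∫ x in Set.Ioo m s, (1 - K x) * (ψ x * g x)
        ≤ ∫ x in Set.Ioo m s, (1 - K x) * (ψ m * g m) := h
      _ = ψ m * g m * c := by rw [integral_mul_const, hbal]; ring
  -- decomposition of the RHS integral
  have hdecomp : ∫ x in Set.Ioo m s, ψ x * g x
      = (∫ x in Set.Ioo m s, ψ x * K x * g x)
        + ∫ x in Set.Ioo m s, (1 - K x) * (ψ x * g x) := by
    rw [← integral_add hint_Kf_ms hint_1Kf_ms]
    exact integral_congr_ae (Eventually.of_forall fun x => by ring)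
  -- decomposition of the LHS integral
  have hsplit : ∫ x in Set.Ioo (0:ℝ) s, ψ x * K x * g x
      = (∫ x in Set.Ioo (0:ℝ) m, ψ x * K x * g x)
        + ∫ x in Set.Ioo m s, ψ x * K x * g x := by
    rw [← hsplitset, setIntegral_union hdisj measurableSet_Ico hint_Kf_0m hint_Kf_Ico]
    rw [integral_Ico_eq_integral_Ioo]
  -- conclude
  have hkey : ∫ x in Set.Ioo m s, ψ x * g x
      ≤ ∫ x in Set.Ioo (0:ℝ) s, ψ x * K x * g x := by
    rw [hdecomp, hsplit]
    linarith
  have hΓ : 0 ≤ 1 / Real.Gamma (γ + 1) :=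
    le_of_lt (div_pos one_pos (Real.Gamma_pos_of_pos (by linarith)))
  exact mul_le_mul_of_nonneg_left hkey hΓ
end

section
/- Let X₁ and X₂ be random variables with CDFs K₁ and K₂ supported on (0,s) satisfying the proportional reversed hazard rate model K₂(x) = (K₁(x))^η for some η > 0, and let γ>0 and ψ ≥ 0. Then: CPE_γ^ψ(X₂) ≤ η^γ · CPE_γ^ψ(X₁) when η ≥ 1, and CPE_γ^ψ(X₂) ≥ η^γ · CPE_γ^ψ(X₁) when 0 < η ≤ 1. -/
open MeasureTheory Set Filter

lemma wfgcpe_aux_key (a η γ : ℝ) (ha0 : 0 ≤ a) (ha1 : a ≤ 1) (hη : 0 < η) :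
    a ^ η * (-Real.log (a ^ η)) ^ γ = η ^ γ * ((-Real.log a) ^ γ * a ^ η) := by
  rcases eq_or_lt_of_le ha0 with h0 | h0
  · rw [← h0, Real.zero_rpow hη.ne']
    ring
  · rw [Real.log_rpow h0, neg_mul_eq_mul_neg,
      Real.mul_rpow hη.le (neg_nonneg.mpr (Real.log_nonpos ha0 ha1))]
    ring

/-- Under the proportional reversed hazard rate model
`K₂(x) = (K₁(x))^η`, `η > 0`: `CPE_γ^ψ(X₂) ≤ η^γ CPE_γ^ψ(X₁)` when `η ≥ 1`, and
`CPE_γ^ψ(X₂) ≥ η^γ CPE_γ^ψ(X₁)` when `0 < η ≤ 1`. -/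
theorem wfgcpe_prhr_bound
    (s : ℝ) (hs : 0 < s)
    (μ₁ μ₂ : Measure ℝ) [IsProbabilityMeasure μ₁] [IsProbabilityMeasure μ₂]
    (hac₁ : μ₁ ≪ volume) (hac₂ : μ₂ ≪ volume)
    (hsupp₁ : μ₁ (Set.Ioo 0 s) = 1) (hsupp₂ : μ₂ (Set.Ioo 0 s) = 1)
    (K₁ K₂ : ℝ → ℝ)
    (hK₁ : ∀ x, K₁ x = (μ₁ (Set.Iic x)).toReal)
    (hK₂ : ∀ x, K₂ x = (μ₂ (Set.Iic x)).toReal)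
    (η : ℝ) (hη : 0 < η)
    (hprhr : ∀ x, K₂ x = (K₁ x) ^ η)
    (ψ : ℝ → ℝ) (hψ0 : ∀ x, 0 ≤ ψ x)
    (γ : ℝ) (hγ : 0 < γ)
    (hfin₁ : IntegrableOn (fun x => ψ x * K₁ x * (-Real.log (K₁ x)) ^ γ) (Set.Ioo 0 s))
    (hfin₂ : IntegrableOn (fun x => ψ x * K₂ x * (-Real.log (K₂ x)) ^ γ) (Set.Ioo 0 s)) :
    (1 ≤ η →
      (1 / Real.Gamma (γ + 1)) *
          ∫ x in Set.Ioo 0 s, ψ x * K₂ x * (-Real.log (K₂ x)) ^ γ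
        ≤ η ^ γ * ((1 / Real.Gamma (γ + 1)) *
            ∫ x in Set.Ioo 0 s, ψ x * K₁ x * (-Real.log (K₁ x)) ^ γ))
    ∧ (η ≤ 1 →
      (1 / Real.Gamma (γ + 1)) *
          ∫ x in Set.Ioo 0 s, ψ x * K₂ x * (-Real.log (K₂ x)) ^ γ
        ≥ η ^ γ * ((1 / Real.Gamma (γ + 1)) *
            ∫ x in Set.Ioo 0 s, ψ x * K₁ x * (-Real.log (K₁ x)) ^ γ)) := by
  have hK10 : ∀ x, 0 ≤ K₁ x := fun x => (hK₁ x) ▸ ENNReal.toReal_nonneg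
  have hK11 : ∀ x, K₁ x ≤ 1 := by
    intro x
    rw [hK₁ x]
    exact ENNReal.toReal_le_of_le_ofReal one_pos.le (by simpa using prob_le_one)
  have hΓ' : 0 < Real.Gamma (γ + 1) := Real.Gamma_pos_of_pos (by linarith)
  have hΓnn : 0 ≤ 1 / Real.Gamma (γ + 1) := by positivity
  -- pointwise rewrite of f₂
  have hpt : ∀ x, ψ x * K₂ x * (-Real.log (K₂ x)) ^ γ
      = η ^ γ * (ψ x * (-Real.log (K₁ x)) ^ γ * (K₁ x) ^ η) := by
    intro x
    rw [hprhr x]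
    have := wfgcpe_aux_key (K₁ x) η γ (hK10 x) (hK11 x) hη
    calc ψ x * (K₁ x) ^ η * (-Real.log ((K₁ x) ^ η)) ^ γ
        = ψ x * ((K₁ x) ^ η * (-Real.log ((K₁ x) ^ η)) ^ γ) := by ring
      _ = ψ x * (η ^ γ * ((-Real.log (K₁ x)) ^ γ * (K₁ x) ^ η)) := by rw [this]
      _ = η ^ γ * (ψ x * (-Real.log (K₁ x)) ^ γ * (K₁ x) ^ η) := by ring
  have hpt1 : ∀ x, η ^ γ * (ψ x * K₁ x * (-Real.log (K₁ x)) ^ γ)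
      = η ^ γ * (ψ x * (-Real.log (K₁ x)) ^ γ * K₁ x) := by intro x; ring
  have hmeas : MeasurableSet (Set.Ioo (0:ℝ) s) := measurableSet_Ioo
  have hint1 : IntegrableOn (fun x => η ^ γ * (ψ x * K₁ x * (-Real.log (K₁ x)) ^ γ))
      (Set.Ioo 0 s) := hfin₁.const_mul _
  have hIeq : ∫ x in Set.Ioo 0 s, η ^ γ * (ψ x * K₁ x * (-Real.log (K₁ x)) ^ γ)
      = η ^ γ * ∫ x in Set.Ioo 0 s, ψ x * K₁ x * (-Real.log (K₁ x)) ^ γ :=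
    MeasureTheory.integral_const_mul _ _
  have hnn : ∀ x, 0 ≤ ψ x * (-Real.log (K₁ x)) ^ γ := by
    intro x
    have hl : 0 ≤ -Real.log (K₁ x) := neg_nonneg.mpr (Real.log_nonpos (hK10 x) (hK11 x))
    exact mul_nonneg (hψ0 x) (Real.rpow_nonneg hl γ)
  constructor
  · intro hη1
    have hmono : ∀ x ∈ Set.Ioo (0:ℝ) s,
        ψ x * K₂ x * (-Real.log (K₂ x)) ^ γ
          ≤ η ^ γ * (ψ x * K₁ x * (-Real.log (K₁ x)) ^ γ) := by
      intro x _
      rw [hpt x, hpt1 x]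
      apply mul_le_mul_of_nonneg_left _ (Real.rpow_nonneg hη.le γ)
      apply mul_le_mul_of_nonneg_left _ (hnn x)
      rcases eq_or_lt_of_le (hK10 x) with h0 | h0
      · rw [← h0, Real.zero_rpow hη.ne']
      · calc (K₁ x) ^ η ≤ (K₁ x) ^ (1:ℝ) :=
              Real.rpow_le_rpow_of_exponent_ge h0 (hK11 x) hη1
          _ = K₁ x := Real.rpow_one _
    have := setIntegral_mono_on hfin₂ hint1 hmeas hmono
    rw [hIeq] at this
    calc (1 / Real.Gamma (γ + 1)) * ∫ x in Set.Ioo 0 s, ψ x * K₂ x * (-Real.log (K₂ x)) ^ γ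
        ≤ (1 / Real.Gamma (γ + 1)) *
            (η ^ γ * ∫ x in Set.Ioo 0 s, ψ x * K₁ x * (-Real.log (K₁ x)) ^ γ) :=
          mul_le_mul_of_nonneg_left this hΓnn
      _ = η ^ γ * ((1 / Real.Gamma (γ + 1)) *
            ∫ x in Set.Ioo 0 s, ψ x * K₁ x * (-Real.log (K₁ x)) ^ γ) := by ring
  · intro hη1
    have hmono : ∀ x ∈ Set.Ioo (0:ℝ) s,
        η ^ γ * (ψ x * K₁ x * (-Real.log (K₁ x)) ^ γ)
          ≤ ψ x * K₂ x * (-Real.log (K₂ x)) ^ γ := by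
      intro x _
      rw [hpt x, hpt1 x]
      apply mul_le_mul_of_nonneg_left _ (Real.rpow_nonneg hη.le γ)
      apply mul_le_mul_of_nonneg_left _ (hnn x)
      rcases eq_or_lt_of_le (hK10 x) with h0 | h0
      · rw [← h0, Real.zero_rpow hη.ne']
      · calc K₁ x = (K₁ x) ^ (1:ℝ) := (Real.rpow_one _).symm
          _ ≤ (K₁ x) ^ η := Real.rpow_le_rpow_of_exponent_ge h0 (hK11 x) hη1
    have := setIntegral_mono_on hint1 hfin₂ hmeas hmono
    rw [hIeq] at this
    calc η ^ γ * ((1 / Real.Gamma (γ + 1)) *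
            ∫ x in Set.Ioo 0 s, ψ x * K₁ x * (-Real.log (K₁ x)) ^ γ)
        = (1 / Real.Gamma (γ + 1)) *
            (η ^ γ * ∫ x in Set.Ioo 0 s, ψ x * K₁ x * (-Real.log (K₁ x)) ^ γ) := by ring
      _ ≤ (1 / Real.Gamma (γ + 1)) *
            ∫ x in Set.Ioo 0 s, ψ x * K₂ x * (-Real.log (K₂ x)) ^ γ :=
          mul_le_mul_of_nonneg_left this hΓnn
end

section
/- Let X be an absolutely continuous random variable with bounded support (0,s), CDF K and survival function K̄ = 1−K, that is symmetric about s/2 in the sense that K(x) = K̄(s−x) for all x ∈ (0,s). Then for every γ>0 and ψ ≥ 0, CPE_γ^ψ(X) = (1/Γ(γ+1)) ∫_0^s ψ(s−x) K̄(x) (−ln K̄(x))^γ dx. In particular, for ψ(x) = x, CPE_γ^ψ(X) = s·CRE_γ(X) − CRE_γ^{ψ(x)=x}(X), where CRE_γ(X) = (1/Γ(γ+1)) ∫_0^s K̄(x)(−ln K̄(x))^γ dx and CRE_γ^{ψ(x)=x}(X) = (1/Γ(γ+1)) ∫_0^s x K̄(x)(−ln K̄(x))^γ dx. -/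
open MeasureTheory Set Filter ENNReal

lemma reflect_integral_aux (s : ℝ) (hs : 0 < s) (F : ℝ → ℝ) :
    ∫ x in Set.Ioo 0 s, F (s - x) = ∫ x in Set.Ioo 0 s, F x := by
  rw [← integral_Ioc_eq_integral_Ioo, ← integral_Ioc_eq_integral_Ioo,
    ← intervalIntegral.integral_of_le hs.le, ← intervalIntegral.integral_of_le hs.le,
    intervalIntegral.integral_comp_sub_left F s]
  simp

lemma bound_aux (γ : ℝ) (hγ : 0 < γ) (u : ℝ) (hu0 : 0 ≤ u) (hu1 : u ≤ 1) :
    u * (-Real.log u) ^ γ ≤ γ ^ γ := by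
  rcases eq_or_lt_of_le hu0 with h | h
  · rw [← h]
    simp only [zero_mul]
    exact le_of_lt (Real.rpow_pos_of_pos hγ γ)
  · set t := -Real.log u with ht
    have ht0 : 0 ≤ t := by
      simp only [ht, neg_nonneg]
      exact Real.log_nonpos hu0 hu1
    have hu : u = Real.exp (-t) := by
      rw [ht, neg_neg, Real.exp_log h]
    have key : t ^ γ ≤ γ ^ γ * Real.exp t := by
      have h1 : t ≤ γ * Real.exp (t / γ) := by
        have h2 : t / γ ≤ Real.exp (t / γ) := by
          have := Real.add_one_le_exp (t / γ)
          linarith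
        have h3 := mul_le_mul_of_nonneg_left h2 hγ.le
        calc t = γ * (t / γ) := by field_simp
          _ ≤ γ * Real.exp (t / γ) := h3
      calc t ^ γ ≤ (γ * Real.exp (t / γ)) ^ γ :=
            Real.rpow_le_rpow ht0 h1 hγ.le
        _ = γ ^ γ * (Real.exp (t / γ)) ^ γ :=
            Real.mul_rpow hγ.le (Real.exp_pos _).le
        _ = γ ^ γ * Real.exp t := by
            rw [← Real.exp_mul, div_mul_cancel₀ _ hγ.ne']
    calc u * t ^ γ = Real.exp (-t) * t ^ γ := by rw [hu]
      _ ≤ Real.exp (-t) * (γ ^ γ * Real.exp t) := by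
          exact mul_le_mul_of_nonneg_left key (Real.exp_pos _).le
      _ = γ ^ γ * (Real.exp (-t) * Real.exp t) := by ring
      _ = γ ^ γ := by rw [← Real.exp_add, neg_add_cancel, Real.exp_zero, mul_one]

/-- For a symmetric (about `s/2`) absolutely continuous random variable
on `(0,s)`, `CPE_γ^ψ(X) = (1/Γ(γ+1)) ∫_0^s ψ(s−x) K̄(x)(−ln K̄(x))^γ dx`, and in
particular for `ψ(x) = x`,
`CPE_γ^ψ(X) = s·CRE_γ(X) − CRE_γ^{ψ(x)=x}(X)`. -/
theorem wfgcpe_symmetric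
    (s : ℝ) (hs : 0 < s)
    (μ : Measure ℝ) [IsProbabilityMeasure μ] (hac : μ ≪ volume)
    (hsupp : μ (Set.Ioo 0 s) = 1)
    (K : ℝ → ℝ) (hK : ∀ x, K x = (μ (Set.Iic x)).toReal)
    (hsym : ∀ x ∈ Set.Ioo 0 s, K x = 1 - K (s - x))
    (ψ : ℝ → ℝ) (hψ0 : ∀ x, 0 ≤ ψ x)
    (γ : ℝ) (hγ : 0 < γ) :
    ((1 / Real.Gamma (γ + 1)) *
        ∫ x in Set.Ioo 0 s, ψ x * K x * (-Real.log (K x)) ^ γ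
      = (1 / Real.Gamma (γ + 1)) *
        ∫ x in Set.Ioo 0 s, ψ (s - x) * (1 - K x) * (-Real.log (1 - K x)) ^ γ)
    ∧
    ((1 / Real.Gamma (γ + 1)) *
        ∫ x in Set.Ioo 0 s, x * K x * (-Real.log (K x)) ^ γ
      = s * ((1 / Real.Gamma (γ + 1)) *
            ∫ x in Set.Ioo 0 s, (1 - K x) * (-Real.log (1 - K x)) ^ γ)
        - (1 / Real.Gamma (γ + 1)) *
            ∫ x in Set.Ioo 0 s, x * (1 - K x) * (-Real.log (1 - K x)) ^ γ) := by
  have hKmono : Monotone K := by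
    intro a b hab
    rw [hK, hK]
    exact ENNReal.toReal_mono (measure_ne_top μ _) (measure_mono (Set.Iic_subset_Iic.mpr hab))
  have hKm : Measurable K := hKmono.measurable
  have hK0 : ∀ x, 0 ≤ K x := fun x => by rw [hK]; exact ENNReal.toReal_nonneg
  have hK1 : ∀ x, K x ≤ 1 := by
    intro x
    rw [hK]
    have := prob_le_one (μ := μ) (s := Set.Iic x)
    calc (μ (Set.Iic x)).toReal ≤ (1 : ℝ≥0∞).toReal :=
      ENNReal.toReal_mono (by simp) this
      _ = 1 := by simp
  set g : ℝ → ℝ := fun x => (1 - K x) * (-Real.log (1 - K x)) ^ γ with hg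
  have hgm : Measurable g := by
    apply (measurable_const.sub hKm).mul
    exact (Real.continuous_rpow_const hγ.le).measurable.comp
      ((Real.measurable_log.comp (measurable_const.sub hKm)).neg)
  have hgbound : ∀ x, |g x| ≤ γ ^ γ := by
    intro x
    have h0 : 0 ≤ 1 - K x := by linarith [hK1 x]
    have h1 : 1 - K x ≤ 1 := by linarith [hK0 x]
    have hnn : 0 ≤ g x := by
      apply mul_nonneg h0
      apply Real.rpow_nonneg
      simp only [neg_nonneg]
      exact Real.log_nonpos h0 h1
    rw [abs_of_nonneg hnn]
    exact bound_aux γ hγ _ h0 h1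
  have hgint : IntegrableOn g (Set.Ioo 0 s) := by
    apply Measure.integrableOn_of_bounded (measure_Ioo_lt_top).ne hgm.aestronglyMeasurable
    exact Filter.Eventually.of_forall (fun x => hgbound x)
  have hxgint : IntegrableOn (fun x => x * g x) (Set.Ioo 0 s) := by
    apply Measure.integrableOn_of_bounded (M := s * γ ^ γ) (measure_Ioo_lt_top).ne
      (measurable_id.mul hgm).aestronglyMeasurable
    filter_upwards [ae_restrict_mem measurableSet_Ioo] with x hx
    simp only [Pi.mul_apply, id_eq, Real.norm_eq_abs, abs_mul]
    have hx0 : 0 ≤ x := hx.1.le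
    have hxs : |x| ≤ s := by rw [abs_of_nonneg hx0]; exact hx.2.le
    have := hgbound x
    have hγγ : (0:ℝ) ≤ γ ^ γ := Real.rpow_nonneg hγ.le γ
    nlinarith [abs_nonneg (g x)]
  -- Part 1
  have part1 : ∀ φ : ℝ → ℝ,
      (∫ x in Set.Ioo 0 s, φ x * K x * (-Real.log (K x)) ^ γ)
        = ∫ x in Set.Ioo 0 s, φ (s - x) * (1 - K x) * (-Real.log (1 - K x)) ^ γ := by
    intro φ
    have hcong : ∀ x ∈ Set.Ioo 0 s,
        φ x * K x * (-Real.log (K x)) ^ γ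
          = (fun y => φ (s - y) * (1 - K y) * (-Real.log (1 - K y)) ^ γ) (s - x) := by
      intro x hx
      simp only
      rw [_root_.sub_sub_cancel, ← hsym x hx]
    calc (∫ x in Set.Ioo 0 s, φ x * K x * (-Real.log (K x)) ^ γ)
        = ∫ x in Set.Ioo 0 s,
            (fun y => φ (s - y) * (1 - K y) * (-Real.log (1 - K y)) ^ γ) (s - x) :=
          setIntegral_congr_fun measurableSet_Ioo hcong
      _ = ∫ x in Set.Ioo 0 s, φ (s - x) * (1 - K x) * (-Real.log (1 - K x)) ^ γ :=
          reflect_integral_aux s hs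
            (fun y => φ (s - y) * (1 - K y) * (-Real.log (1 - K y)) ^ γ)
  constructor
  · rw [part1 ψ]
  · have h1 := part1 (fun x => x)
    have h2 : (∫ x in Set.Ioo 0 s, (s - x) * (1 - K x) * (-Real.log (1 - K x)) ^ γ)
        = s * (∫ x in Set.Ioo 0 s, g x) - ∫ x in Set.Ioo 0 s, x * g x := by
      have : ∀ x, (s - x) * (1 - K x) * (-Real.log (1 - K x)) ^ γ = s * g x - x * g x := by
        intro x; simp only [hg]; ring
      simp_rw [this]
      rw [integral_sub (hgint.const_mul s) hxgint, integral_const_mul]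
    have e1 : (∫ x in Set.Ioo 0 s, x * (1 - K x) * (-Real.log (1 - K x)) ^ γ)
        = ∫ x in Set.Ioo 0 s, x * g x := by
      simp_rw [hg, mul_assoc]
    rw [h1, h2, e1, hg]
    ring
end

section
/- Let T₁, T₂, … be independent and identically distributed nonnegative absolutely continuous random variables with common CDF K supported on (0,s), satisfying E|T₁|^p < ∞ for some p > 2, let ψ ≥ 0 be a fixed integrable weight function and γ > 0. Let K̂_n denote the empirical distribution function of the first n observations, K̂_n(x) = (1/n)∑_{i=1}^n 1{T_i ≤ x}, and define the empirical WFGCPE CPE_γ^ψ(K̂_n) = (1/Γ(γ+1)) ∫_0^s ψ(x) K̂_n(x) (−ln K̂_n(x))^γ dx (with the convention 0·(−ln 0)^γ = 0). Then CPE_γ^ψ(K̂_n) → CPE_γ^ψ(X) almost surely as n → ∞, where X has CDF K. -/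
open MeasureTheory Set Filter ProbabilityTheory

open Topology

lemma gcont (γ : ℝ) (hγ : 0 < γ) :
    ContinuousOn (fun u : ℝ => u * (-Real.log u) ^ γ) (Set.Icc 0 1) := by
  intro u hu
  rcases eq_or_lt_of_le hu.1 with h0 | h0
  · subst h0
    unfold ContinuousWithinAt
    rw [show (fun u : ℝ => u * (-Real.log u) ^ γ) 0 = 0 from by simp]
    have hsub : Set.Icc (0:ℝ) 1 ⊆ insert 0 (Set.Ioi 0) := by
      intro v hv
      rcases eq_or_lt_of_le hv.1 with h | h
      · exact Or.inl h.symm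
      · exact Or.inr h
    refine Tendsto.mono_left ?_ (nhdsWithin_mono 0 hsub)
    rw [nhdsWithin_insert]
    rw [tendsto_sup]
    constructor
    · simpa using tendsto_pure_nhds (fun u : ℝ => u * (-Real.log u) ^ γ) 0
    · have key : Tendsto (fun t : ℝ => t ^ γ * Real.exp (-1 * t)) atTop (𝓝 0) :=
        tendsto_rpow_mul_exp_neg_mul_atTop_nhds_zero γ 1 one_pos
      have hlog : Tendsto (fun u : ℝ => -Real.log u) (𝓝[>] (0:ℝ)) atTop := by
        have := Real.tendsto_log_nhdsGT_zero
        exact tendsto_neg_atBot_atTop.comp this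
      have := key.comp hlog
      refine this.congr' ?_
      filter_upwards [self_mem_nhdsWithin] with v (hv : v ∈ Set.Ioi 0)
      simp only [Function.comp_apply]
      rw [neg_one_mul, neg_neg, Real.exp_log hv, mul_comm]
  · refine ContinuousAt.continuousWithinAt ?_
    have h1 : ContinuousAt (fun v : ℝ => (-Real.log v) ^ γ) u :=
      ((Real.continuousAt_log h0.ne').neg).rpow_const (Or.inr hγ.le)
    exact continuousAt_id.mul h1

lemma gbound (γ : ℝ) (hγ : 0 < γ) :
    ∃ C : ℝ, 0 ≤ C ∧ ∀ u ∈ Set.Icc (0:ℝ) 1, |u * (-Real.log u) ^ γ| ≤ C := by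
  obtain ⟨C, hC⟩ := isCompact_Icc.exists_bound_of_continuousOn (gcont γ hγ)
  refine ⟨max C 0, le_max_right _ _, fun u hu => ?_⟩
  exact le_trans (hC u hu) (le_max_left _ _)

lemma slln_fixed_x {Ω : Type*} [MeasurableSpace Ω] (P : Measure Ω) [IsProbabilityMeasure P]
    (T : ℕ → Ω → ℝ) (hTm : ∀ i, Measurable (T i))
    (hindep : iIndepFun T P)
    (μ : Measure ℝ) [IsProbabilityMeasure μ]
    (hident : ∀ i, Measure.map (T i) P = μ) (x : ℝ) :
    ∀ᵐ ω ∂P, Tendsto (fun n : ℕ => (1 / (n:ℝ)) *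
        ∑ i ∈ Finset.range n, if T i ω ≤ x then (1:ℝ) else 0)
      atTop (𝓝 ((μ (Set.Iic x)).toReal)) := by
  set φ : ℝ → ℝ := fun t => if t ≤ x then 1 else 0 with hφ
  have hφm : Measurable φ := Measurable.ite measurableSet_Iic measurable_const measurable_const
  set X : ℕ → Ω → ℝ := fun i ω => φ (T i ω) with hX
  have hXm : ∀ i, Measurable (X i) := fun i => hφm.comp (hTm i)
  have hint : Integrable (X 0) P := by
    refine (integrable_const (1:ℝ)).mono' ((hXm 0).aestronglyMeasurable) ?_
    refine Eventually.of_forall fun ω => ?_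
    by_cases h : T 0 ω ≤ x <;> simp [X, φ, h]
  have hpind : Pairwise (Function.onFun (IndepFun · · P) X) := by
    intro i j hij
    exact (hindep.indepFun hij).comp hφm hφm
  have hid : ∀ i, IdentDistrib (X i) (X 0) P P := by
    intro i
    have h0 : IdentDistrib (T i) (T 0) P P :=
      ⟨(hTm i).aemeasurable, (hTm 0).aemeasurable, by rw [hident i, hident 0]⟩
    exact h0.comp hφm
  have hmean : P[X 0] = (μ (Set.Iic x)).toReal := by
    have heq : X 0 = Set.indicator (T 0 ⁻¹' Set.Iic x) (fun _ => (1:ℝ)) := by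
      ext ω; by_cases h : T 0 ω ≤ x <;> simp [X, φ, Set.indicator, h]
    rw [heq, integral_indicator_const _ ((hTm 0) measurableSet_Iic)]
    rw [measureReal_def, ← Measure.map_apply (hTm 0) measurableSet_Iic, hident 0]
    simp
  filter_upwards [strong_law_ae_real X hint hpind hid] with ω hω
  rw [hmean] at hω
  refine hω.congr fun n => ?_
  rw [one_div, inv_mul_eq_div]

/-- Strong consistency of the empirical WFGCPE: for an i.i.d. sample
`T₁, T₂, …` with common absolutely continuous CDF `K` supported on `(0,s)` and a
finite `p`-th absolute moment for some `p > 2`, the empirical WFGCPE converges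
almost surely to `CPE_γ^ψ(X)`. -/
theorem empirical_wfgcpe_strong_consistency
    {Ω : Type*} [MeasurableSpace Ω] (P : Measure Ω) [IsProbabilityMeasure P]
    (T : ℕ → Ω → ℝ) (hTm : ∀ i, Measurable (T i))
    (hindep : iIndepFun T P)
    (μ : Measure ℝ) [IsProbabilityMeasure μ]
    (hident : ∀ i, Measure.map (T i) P = μ)
    (hac : μ ≪ volume)
    (s : ℝ) (hs : 0 < s) (hsupp : μ (Set.Ioo 0 s) = 1)
    (K : ℝ → ℝ) (hK : ∀ x, K x = (μ (Set.Iic x)).toReal)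
    (p : ℝ) (hp : 2 < p)
    (hmom : Integrable (fun ω => |T 0 ω| ^ p) P)
    (ψ : ℝ → ℝ) (hψ0 : ∀ x, 0 ≤ ψ x) (hψint : IntegrableOn ψ (Set.Ioo 0 s))
    (γ : ℝ) (hγ : 0 < γ)
    (Kemp : ℕ → Ω → ℝ → ℝ)
    (hKemp : ∀ n ω x, Kemp n ω x =
      (1 / (n : ℝ)) * ∑ i ∈ Finset.range n, if T i ω ≤ x then (1 : ℝ) else 0)
    (hfin : IntegrableOn (fun x => ψ x * K x * (-Real.log (K x)) ^ γ) (Set.Ioo 0 s)) :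
    ∀ᵐ ω ∂P, Tendsto
      (fun n : ℕ => (1 / Real.Gamma (γ + 1)) *
        ∫ x in Set.Ioo 0 s, ψ x * Kemp n ω x * (-Real.log (Kemp n ω x)) ^ γ)
      atTop
      (nhds ((1 / Real.Gamma (γ + 1)) *
        ∫ x in Set.Ioo 0 s, ψ x * K x * (-Real.log (K x)) ^ γ)) := by
  set ν := volume.restrict (Set.Ioo 0 s) with hν
  -- K is monotone hence measurable, with values in [0,1]
  have hKmono : Monotone K := by
    intro a b hab
    rw [hK a, hK b]
    exact ENNReal.toReal_mono (measure_ne_top μ _) (measure_mono (Set.Iic_subset_Iic.mpr hab))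
  have hKmeas : Measurable K := hKmono.measurable
  have hKmem : ∀ x, K x ∈ Set.Icc (0:ℝ) 1 := by
    intro x
    refine ⟨by rw [hK x]; exact ENNReal.toReal_nonneg, ?_⟩
    rw [hK x]
    simpa using ENNReal.toReal_mono ENNReal.one_ne_top (prob_le_one (μ := μ))
  -- Kemp values in [0,1]
  have hKempmem : ∀ n ω x, Kemp n ω x ∈ Set.Icc (0:ℝ) 1 := by
    intro n ω x
    rw [hKemp n ω x]
    constructor
    · apply mul_nonneg (by positivity)
      apply Finset.sum_nonneg
      intro i _
      by_cases h : T i ω ≤ x <;> simp [h]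
    · rcases Nat.eq_zero_or_pos n with rfl | hn
      · simp
      · have hsum : (∑ i ∈ Finset.range n, if T i ω ≤ x then (1:ℝ) else 0) ≤ n := by
          have := Finset.sum_le_card_nsmul (Finset.range n)
            (fun i => if T i ω ≤ x then (1:ℝ) else 0) 1
            (fun i _ => by by_cases h : T i ω ≤ x <;> simp [h])
          simpa using this
        have hn' : (0:ℝ) < n := by exact_mod_cast hn
        calc (1 / (n:ℝ)) * ∑ i ∈ Finset.range n, (if T i ω ≤ x then (1:ℝ) else 0)
            ≤ (1 / (n:ℝ)) * n := by
              apply mul_le_mul_of_nonneg_left hsum (by positivity)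
          _ = 1 := by field_simp
  -- joint measurability of Kemp
  have hF : ∀ n, Measurable fun q : Ω × ℝ => Kemp n q.1 q.2 := by
    intro n
    have heq : (fun q : Ω × ℝ => Kemp n q.1 q.2)
        = fun q => (1/(n:ℝ)) * ∑ i ∈ Finset.range n, if T i q.1 ≤ q.2 then (1:ℝ) else 0 := by
      funext q; exact hKemp n q.1 q.2
    rw [heq]
    apply Measurable.const_mul
    apply Finset.measurable_sum
    intro i _
    have hset : MeasurableSet {q : Ω × ℝ | T i q.1 ≤ q.2} :=
      measurableSet_le ((hTm i).comp measurable_fst) measurable_snd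
    exact Measurable.ite hset measurable_const measurable_const
  -- the convergence set is jointly measurable
  have hNmeas : MeasurableSet {q : Ω × ℝ |
      Tendsto (fun n => Kemp n q.1 q.2) atTop (𝓝 (K q.2))} :=
    measurableSet_tendsto_fun hF (hKmeas.comp measurable_snd)
  -- SLLN at each fixed x
  have hslln : ∀ x : ℝ, ∀ᵐ ω ∂P, Tendsto (fun n => Kemp n ω x) atTop (𝓝 (K x)) := by
    intro x
    filter_upwards [slln_fixed_x P T hTm hindep μ hident x] with ω hω
    rw [← hK x] at hω
    exact hω.congr fun n => (hKemp n ω x).symm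
  -- Fubini step: a.e. ω, a.e. x, convergence
  have hfub : ∀ᵐ ω ∂P, ∀ᵐ x ∂ν, Tendsto (fun n => Kemp n ω x) atTop (𝓝 (K x)) := by
    have := (Measure.ae_ae_comm (μ := P) (ν := ν)
      (p := fun ω x => Tendsto (fun n => Kemp n ω x) atTop (𝓝 (K x))) hNmeas).mpr
    exact this (Eventually.of_forall fun x => hslln x)
  -- bound on g
  obtain ⟨C, hC0, hCb⟩ := gbound γ hγ
  -- conclude by dominated convergence
  filter_upwards [hfub] with ω hω
  apply Tendsto.const_mul
  apply tendsto_integral_of_dominated_convergence (fun x => C * ψ x)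
  · -- measurability
    intro n
    have hkm : Measurable fun x => Kemp n ω x := by
      have heq : (fun x => Kemp n ω x)
          = fun x => (1/(n:ℝ)) * ∑ i ∈ Finset.range n, if T i ω ≤ x then (1:ℝ) else 0 := by
        funext x; exact hKemp n ω x
      rw [heq]
      apply Measurable.const_mul
      apply Finset.measurable_sum
      intro i _
      exact Measurable.ite measurableSet_Ici measurable_const measurable_const
    have hrp : Measurable fun x => (-Real.log (Kemp n ω x)) ^ γ :=
      (Real.continuous_rpow_const hγ.le).measurable.comp (Real.measurable_log.comp hkm).neg
    exact (hψint.aestronglyMeasurable.mul hkm.aestronglyMeasurable).mul hrp.aestronglyMeasurable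
  · -- bound integrable
    exact hψint.const_mul C
  · -- bound holds
    intro n
    refine Eventually.of_forall fun x => ?_
    have h1 : |ψ x * Kemp n ω x * (-Real.log (Kemp n ω x)) ^ γ|
        = ψ x * |Kemp n ω x * (-Real.log (Kemp n ω x)) ^ γ| := by
      rw [mul_assoc, abs_mul, abs_of_nonneg (hψ0 x)]
    rw [Real.norm_eq_abs, h1, mul_comm C (ψ x)]
    exact mul_le_mul_of_nonneg_left (hCb _ (hKempmem n ω x)) (hψ0 x)
  · -- pointwise limit
    filter_upwards [hω] with x hx
    have hmem : Tendsto (fun n => Kemp n ω x) atTop (𝓝[Set.Icc 0 1] (K x)) :=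
      tendsto_nhdsWithin_of_tendsto_nhds_of_eventually_within _ hx
        (Eventually.of_forall fun n => hKempmem n ω x)
    have hg := ((gcont γ hγ) (K x) (hKmem x)).tendsto
    have := hg.comp hmem
    simp only [mul_assoc]
    exact (this.const_mul (ψ x))
end
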